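/- Let Γ be a finite directed graph. Every closed inverse subsemigroup of S(Γ) conjugate to a closed inverse subsemigroup of cycle type is itself of cycle type. Moreover, two closed inverse subsemigroups of cycle type L_{p,d} and L_{q,k} are conjugate in S(Γ) if and only if the directed circuits p and q are conjugate paths, i.e. p = uv and q = vu for some paths u, v. -/

import Mathlib

/-- A (finite) directed graph: vertices, edges, and source/target maps. -/
structure DGraph where
  V : Type
  E : Type
  src : E → V
  tgt : E → V

namespace DGraph

/-- The vertex reached after traversing a list of edges from a vertex. -/
def walkEnd (G : DGraph) : G.V → List G.E → G.V
  | v, [] => v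
  | _, e :: l => walkEnd G (G.tgt e) l

/-- The list of edges forms a directed walk starting at the given vertex. -/
def IsWalk (G : DGraph) : G.V → List G.E → Prop
  | _, [] => True
  | v, e :: l => G.src e = v ∧ IsWalk G (G.tgt e) l

variable (G : DGraph)

@[simp] theorem walkEnd_nil (v : G.V) : G.walkEnd v [] = v := rfl
@[simp] theorem walkEnd_cons (v : G.V) (e : G.E) (l : List G.E) :
    G.walkEnd v (e :: l) = G.walkEnd (G.tgt e) l := rfl
@[simp] theorem isWalk_nil (v : G.V) : G.IsWalk v [] := trivial
@[simp] theorem isWalk_cons (v : G.V) (e : G.E) (l : List G.E) :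
    G.IsWalk v (e :: l) ↔ G.src e = v ∧ G.IsWalk (G.tgt e) l := Iff.rfl

theorem isWalk_append (v : G.V) (l1 l2 : List G.E) :
    G.IsWalk v (l1 ++ l2) ↔ G.IsWalk v l1 ∧ G.IsWalk (G.walkEnd v l1) l2 := by
  induction l1 generalizing v with
  | nil => simp [IsWalk, walkEnd]
  | cons e l ih => simp [IsWalk, walkEnd, ih, and_assoc]

/-- A directed path in `G`: an initial vertex together with a compatible
list of edges, traversed in order (empty paths are allowed). -/
structure DPath (G : DGraph) where
  first : G.V
  edges : List G.E
  wf : G.IsWalk first edges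

namespace DPath

variable {G}

/-- The terminal vertex of a directed path. -/
def last (p : G.DPath) : G.V := G.walkEnd p.first p.edges

/-- The list of vertices lying on a directed path. -/
def vertexList (p : G.DPath) : List G.V := p.first :: p.edges.map G.tgt

/-- `q` is a suffix (terminal segment) of `p`: `p = l ⬝ q` for some edge list `l`. -/
def IsSuffixOf (q p : G.DPath) : Prop :=
  ∃ l : List G.E, p.edges = l ++ q.edges ∧ q.first = G.walkEnd p.first l

end DPath

theorem isWalk_chopAppend {u v w : G.DPath} (hs : v.IsSuffixOf u) (hvw : v.first = w.first) :
    G.IsWalk u.first (u.edges.take (u.edges.length - v.edges.length) ++ w.edges) := by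
  obtain ⟨l, hl, hfst⟩ := hs
  rw [hl]
  have hlen : (l ++ v.edges).length - v.edges.length = l.length := by simp
  rw [hlen, List.take_left, G.isWalk_append]
  have hu := u.wf
  rw [hl, G.isWalk_append] at hu
  refine ⟨hu.1, ?_⟩
  rw [← hfst, hvw]
  exact w.wf

theorem isWalk_concat {p q : G.DPath} (h : q.first = p.last) :
    G.IsWalk p.first (p.edges ++ q.edges) := by
  rw [G.isWalk_append]
  refine ⟨p.wf, ?_⟩
  show G.IsWalk p.last q.edges
  rw [← h]
  exact q.wf

/-- Concatenation of composable directed paths. -/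
def concatPath (p q : G.DPath) (h : q.first = p.last) : G.DPath :=
  ⟨p.first, p.edges ++ q.edges, G.isWalk_concat h⟩

theorem isWalk_replicate (a : G.E) (h : G.tgt a = G.src a) (m : ℕ) :
    G.IsWalk (G.src a) (List.replicate m a) := by
  induction m with
  | zero => trivial
  | succ n ih => rw [List.replicate_succ, G.isWalk_cons]; exact ⟨rfl, by rw [h]; exact ih⟩

/-- The path traversing a loop `a` exactly `m` times. -/
def loopPow (a : G.E) (h : G.tgt a = G.src a) (m : ℕ) : G.DPath :=
  ⟨G.src a, List.replicate m a, G.isWalk_replicate a h m⟩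

/-- `p` is a nonempty directed circuit. -/
def IsCircuit (p : G.DPath) : Prop := p.edges ≠ [] ∧ p.last = p.first

/-- `p` and `d` share no nontrivial common prefix (initial segment). -/
def NoCommonPrefix (p d : G.DPath) : Prop :=
  ∀ l : List G.E, l ≠ [] → l <+: p.edges → ¬ l <+: d.edges

end DGraph

/-- The underlying set of the graph inverse semigroup `S(Γ)`: pairs of directed
paths with the same initial vertex, together with a zero element. -/
inductive GIS (G : DGraph) where
  | zero : GIS G
  | pair (a b : G.DPath) (h : a.first = b.first) : GIS G

namespace GIS

open scoped Classical in
/-- The multiplication of the graph inverse semigroup: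
`(t,u)(v,w) = (t,pw)` if `u = pv`, `(pt,w)` if `v = pu`, and `0` otherwise. -/
noncomputable def mul {G : DGraph} : GIS G → GIS G → GIS G
  | .zero, _ => .zero
  | .pair _ _ _, .zero => .zero
  | .pair t u h1, .pair v w h2 =>
    if hs : v.IsSuffixOf u then
      .pair t ⟨t.first, u.edges.take (u.edges.length - v.edges.length) ++ w.edges,
        by rw [h1]; exact G.isWalk_chopAppend hs h2⟩ rfl
    else if hs' : u.IsSuffixOf v then
      .pair ⟨v.first, v.edges.take (v.edges.length - u.edges.length) ++ t.edges,
        G.isWalk_chopAppend hs' h1.symm⟩ w h2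
    else .zero

noncomputable instance {G : DGraph} : Mul (GIS G) := ⟨GIS.mul⟩

/-- The inverse: `(v,w)⁻¹ = (w,v)` and `0⁻¹ = 0`. -/
def inv {G : DGraph} : GIS G → GIS G
  | .zero => .zero
  | .pair a b h => .pair b a h.symm

/-- The natural partial order: `x ≤ y` iff `x = e * y` for some idempotent `e`. -/
def le {G : DGraph} (x y : GIS G) : Prop := ∃ e : GIS G, e * e = e ∧ x = e * y

end GIS

/-- `L` is a closed inverse subsemigroup of `S(Γ)`: a nonempty subset closed under
multiplication, inverses, and upward closed in the natural partial order. -/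
def IsCISS (G : DGraph) (L : Set (GIS G)) : Prop :=
  L.Nonempty ∧ (∀ a ∈ L, ∀ b ∈ L, a * b ∈ L) ∧ (∀ a ∈ L, a.inv ∈ L) ∧
    (∀ a ∈ L, ∀ s : GIS G, GIS.le a s → s ∈ L)

/-- The closed inverse subsemigroup `↑{(u,u)}` of (finite) chain type:
all `(q,q)` with `q` a suffix of `u`. -/
def chainSet (G : DGraph) (u : G.DPath) : Set (GIS G) :=
  {x | ∃ q : G.DPath, q.IsSuffixOf u ∧ x = GIS.pair q q rfl}

/-- The edge list of the `r`-th power of the path `p`. -/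
def powEdges {G : DGraph} (p : G.DPath) (r : ℕ) : List G.E :=
  (List.replicate r p.edges).flatten

/-- The closed inverse subsemigroup of cycle type
`L_{p,d} = {(v p^r d, v p^s d) : r,s ≥ 0, v a suffix of p} ∪ {(q,q) : q a suffix of d}`. -/
def cycleSet (G : DGraph) (p d : G.DPath) : Set (GIS G) :=
  {x | (∃ (r s : ℕ) (v a b : G.DPath) (h : a.first = b.first),
          v.IsSuffixOf p ∧ x = GIS.pair a b h ∧
          a.first = v.first ∧ a.edges = v.edges ++ powEdges p r ++ d.edges ∧
          b.first = v.first ∧ b.edges = v.edges ++ powEdges p s ++ d.edges) ∨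
       (∃ q : G.DPath, q.IsSuffixOf d ∧ x = GIS.pair q q rfl)}

/-- `L` is a chain of idempotents: all elements are idempotent and any two are
comparable in the natural partial order. -/
def IsChainOfIdem (G : DGraph) (L : Set (GIS G)) : Prop :=
  (∀ x ∈ L, x * x = x) ∧ ∀ x ∈ L, ∀ y ∈ L, GIS.le x y ∨ GIS.le y x

/-- The set of right cosets `↑(Lt)` (for `t` with `t t⁻¹ ∈ L`) of a closed inverse
subsemigroup `L`. -/
def cosets (G : DGraph) (L : Set (GIS G)) : Set (Set (GIS G)) :=
  {C | ∃ t : GIS G, t * t.inv ∈ L ∧ C = {s | ∃ x ∈ L, GIS.le (x * t) s}}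

/-- `H` and `K` are conjugate: for some `s`, `s⁻¹Hs ⊆ K` and `sKs⁻¹ ⊆ H`. -/
def Conjugate (G : DGraph) (H K : Set (GIS G)) : Prop :=
  ∃ s : GIS G, (∀ h ∈ H, s.inv * h * s ∈ K) ∧ (∀ k ∈ K, s * k * s.inv ∈ H)

/-- The set of directed paths with initial vertex `v` whose first edge (if any)
is not an edge of `w`. -/
def Npaths (G : DGraph) (v : G.V) (w : G.DPath) : Set G.DPath :=
  {t | t.first = v ∧ ∀ e, t.edges.head? = some e → e ∉ w.edges}

/-! ### Auxiliary development for Statement 13 -/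

namespace DGraph

variable {G : DGraph}

theorem DPath.ext' {p q : G.DPath} (h1 : p.first = q.first) (h2 : p.edges = q.edges) :
    p = q := by
  cases p; cases q; simp_all

theorem DPath.first_eq_src {p : G.DPath} {e : G.E} {l : List G.E} (h : p.edges = e :: l) :
    p.first = G.src e := by
  have hw := p.wf
  rw [h] at hw
  exact hw.1.symm

theorem DPath.ext_ne {p q : G.DPath} (h2 : p.edges = q.edges) (hne : p.edges ≠ []) :
    p = q := by
  cases hp : p.edges with
  | nil => exact absurd hp hne
  | cons e l =>
    exact DPath.ext' ((DPath.first_eq_src hp).trans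
      (DPath.first_eq_src (h2.symm.trans hp)).symm) h2

theorem walkEnd_append' (v : G.V) (l1 l2 : List G.E) :
    G.walkEnd v (l1 ++ l2) = G.walkEnd (G.walkEnd v l1) l2 := by
  induction l1 generalizing v with
  | nil => rfl
  | cons e l ih => simp [ih]

theorem walkEnd_take_succ (v : G.V) {l : List G.E} (i : ℕ) (hi : i < l.length) :
    G.walkEnd v (l.take (i+1)) = G.tgt (l[i]) := by
  induction l generalizing v i with
  | nil => simp at hi
  | cons e t ih =>
    cases i with
    | zero => simp
    | succ n =>
      simp only [List.take_succ_cons, walkEnd_cons, List.getElem_cons_succ]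
      exact ih _ _ (by simpa using hi)

theorem src_getElem_walk {v : G.V} {l : List G.E} (hw : G.IsWalk v l)
    (i : ℕ) (hi : i < l.length) : G.src (l[i]) = G.walkEnd v (l.take i) := by
  induction l generalizing v i with
  | nil => simp at hi
  | cons e t ih =>
    cases i with
    | zero => simpa using hw.1
    | succ n =>
      simp only [List.take_succ_cons, walkEnd_cons, List.getElem_cons_succ]
      exact ih hw.2 n (by simpa using hi)

namespace DPath

theorem suffix_refl (p : G.DPath) : p.IsSuffixOf p := ⟨[], rfl, rfl⟩

theorem IsSuffixOf.length_le {u v : G.DPath} (h : u.IsSuffixOf v) :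
    u.edges.length ≤ v.edges.length := by
  obtain ⟨l, hl, -⟩ := h
  simp [hl]

theorem IsSuffixOf.eq_of_length {u v : G.DPath} (h : u.IsSuffixOf v)
    (hl : u.edges.length = v.edges.length) : u = v := by
  obtain ⟨l, hle, hf⟩ := h
  have hl0 : l = [] := by
    have := congrArg List.length hle
    simp [hl] at this
    exact this
  subst hl0
  exact DPath.ext' (by simpa using hf) (by simpa using hle.symm)

end DPath

theorem getElem_congr' {α : Type _} {l : List α} {i j : ℕ} (h : i = j) {hi : i < l.length} :
    l[i]'hi = l[j]'(h ▸ hi) := by subst h; rfl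

/-- Letters of a list counted from the right: `rlet l 0` is the last element. -/
def rlet (l : List G.E) (i : ℕ) (h : i < l.length) : G.E := l[l.length - 1 - i]'(by omega)

theorem tgt_rlet_zero {p : G.DPath} (h : 0 < p.edges.length) :
    G.tgt (rlet p.edges 0 h) = p.last := by
  have h1 := G.walkEnd_take_succ p.first (p.edges.length - 1)
    (by omega : p.edges.length - 1 < p.edges.length)
  rw [show p.edges.length - 1 + 1 = p.edges.length by omega, List.take_length] at h1
  unfold rlet DPath.last
  rw [getElem_congr' (show p.edges.length - 1 - 0 = p.edges.length - 1 by omega), ← h1]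

theorem tgt_rlet_succ {v : G.V} {l : List G.E} (hw : G.IsWalk v l) {i : ℕ}
    (h : i + 1 < l.length) :
    G.tgt (rlet l (i+1) h) = G.src (rlet l i (by omega)) := by
  have h2 := G.src_getElem_walk hw (l.length - 1 - i) (by omega)
  have h3 := G.walkEnd_take_succ v (l.length - 1 - i - 1)
    (by omega : l.length - 1 - i - 1 < l.length)
  rw [show l.length - 1 - i - 1 + 1 = l.length - 1 - i by omega] at h3
  unfold rlet
  rw [getElem_congr' (show l.length - 1 - (i+1) = l.length - 1 - i - 1 by omega), h2, ← h3]

theorem src_rlet_last {v : G.V} {l : List G.E} (hw : G.IsWalk v l) (h : 0 < l.length) :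
    G.src (rlet l (l.length - 1) (by omega)) = v := by
  have h2 := G.src_getElem_walk hw (l.length - 1 - (l.length - 1)) (by omega)
  unfold rlet
  rw [h2, show l.length - 1 - (l.length - 1) = 0 by omega]
  rfl

end DGraph


namespace DGraph

variable {G : DGraph}

/-- A leftward-infinite walk in `G`, presented by its letters read from the right:
`om 0` is the final edge. -/
structure Ray (G : DGraph) where
  om : ℕ → G.E
  v0 : G.V
  coh0 : G.tgt (om 0) = v0
  coh : ∀ i, G.tgt (om (i+1)) = G.src (om i)

namespace Ray

/-- The vertex at depth `i` from the end of the ray. -/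
def sig (R : Ray G) : ℕ → G.V
  | 0 => R.v0
  | i + 1 => G.src (R.om i)

theorem tgt_om (R : Ray G) (i : ℕ) : G.tgt (R.om i) = R.sig i := by
  cases i with
  | zero => exact R.coh0
  | succ n => exact R.coh n

/-- Edges of the ray between depths `lo` and `lo + n`. -/
def segEdges (R : Ray G) (lo : ℕ) : ℕ → List G.E
  | 0 => []
  | n + 1 => R.om (lo + n) :: segEdges R lo n

@[simp] theorem length_segEdges (R : Ray G) (lo n : ℕ) : (R.segEdges lo n).length = n := by
  induction n with
  | zero => rfl
  | succ n ih => simp [segEdges, ih]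

theorem isWalk_segEdges (R : Ray G) (lo n : ℕ) :
    G.IsWalk (R.sig (lo + n)) (R.segEdges lo n) := by
  induction n with
  | zero => trivial
  | succ n ih =>
    refine ⟨rfl, ?_⟩
    rw [R.tgt_om]
    exact ih

/-- The sub-path of the ray from depth `lo + n` down to depth `lo`. -/
def seg (R : Ray G) (lo n : ℕ) : G.DPath :=
  ⟨R.sig (lo + n), R.segEdges lo n, R.isWalk_segEdges lo n⟩

/-- The final path of length `n` of the ray. -/
def tailP (R : Ray G) (n : ℕ) : G.DPath := R.seg 0 n

@[simp] theorem seg_first (R : Ray G) (lo n : ℕ) : (R.seg lo n).first = R.sig (lo + n) := rfl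
@[simp] theorem seg_edges (R : Ray G) (lo n : ℕ) : (R.seg lo n).edges = R.segEdges lo n := rfl
@[simp] theorem tailP_first (R : Ray G) (n : ℕ) : (R.tailP n).first = R.sig n := by
  show R.sig (0 + n) = R.sig n
  rw [Nat.zero_add]
@[simp] theorem tailP_edges (R : Ray G) (n : ℕ) : (R.tailP n).edges = R.segEdges 0 n := rfl
@[simp] theorem tailP_length (R : Ray G) (n : ℕ) : (R.tailP n).edges.length = n := by simp
@[simp] theorem seg_length (R : Ray G) (lo n : ℕ) : (R.seg lo n).edges.length = n := by simp

theorem walkEnd_segEdges (R : Ray G) (lo n : ℕ) :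
    G.walkEnd (R.sig (lo + n)) (R.segEdges lo n) = R.sig lo := by
  induction n with
  | zero => rfl
  | succ n ih =>
    show G.walkEnd _ (_ :: _) = _
    rw [walkEnd_cons, R.tgt_om]
    exact ih

theorem seg_last (R : Ray G) (lo n : ℕ) : (R.seg lo n).last = R.sig lo :=
  R.walkEnd_segEdges lo n

theorem segEdges_append (R : Ray G) (lo m n : ℕ) :
    R.segEdges lo (m + n) = R.segEdges (lo + m) n ++ R.segEdges lo m := by
  induction n with
  | zero => rfl
  | succ n ih =>
    show R.om (lo + (m + n)) :: R.segEdges lo (m + n) = _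
    rw [ih, show lo + (m + n) = lo + m + n by omega]
    rfl

theorem seg_suffix (R : Ray G) (lo : ℕ) {m n : ℕ} (h : m ≤ n) :
    (R.seg lo m).IsSuffixOf (R.seg lo n) := by
  refine ⟨R.segEdges (lo + m) (n - m), ?_, ?_⟩
  · show R.segEdges lo n = _ ++ R.segEdges lo m
    rw [← R.segEdges_append lo m (n - m), show m + (n - m) = n by omega]
  · show R.sig (lo + m) = G.walkEnd (R.sig (lo + n)) _
    rw [show lo + n = lo + m + (n - m) by omega, R.walkEnd_segEdges]

theorem tailP_suffix (R : Ray G) {m n : ℕ} (h : m ≤ n) :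
    (R.tailP m).IsSuffixOf (R.tailP n) := R.seg_suffix 0 h

theorem suffix_seg {z : G.DPath} {R : Ray G} {lo n : ℕ} (h : z.IsSuffixOf (R.seg lo n)) :
    z = R.seg lo z.edges.length ∧ z.edges.length ≤ n := by
  obtain ⟨l, hl, hf⟩ := h
  simp only [seg_edges] at hl
  have hll : l.length + z.edges.length = n := by
    have := congrArg List.length hl
    simp at this
    omega
  have hlen : z.edges.length ≤ n := by omega
  have hsplit := R.segEdges_append lo z.edges.length (n - z.edges.length)
  rw [show z.edges.length + (n - z.edges.length) = n by omega] at hsplit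
  rw [hsplit] at hl
  have hinj := List.append_inj hl.symm (by simp; omega)
  refine ⟨DPath.ext' ?_ (by simpa using hinj.2), hlen⟩
  rw [hf, hinj.1]
  show G.walkEnd (R.sig (lo + n)) _ = R.sig (lo + z.edges.length)
  rw [show lo + n = lo + z.edges.length + (n - z.edges.length) by omega, R.walkEnd_segEdges]

theorem suffix_tailP {z : G.DPath} {R : Ray G} {n : ℕ} (h : z.IsSuffixOf (R.tailP n)) :
    z = R.tailP z.edges.length ∧ z.edges.length ≤ n := suffix_seg h

theorem tailP_inj {R : Ray G} {i j : ℕ} (h : R.tailP i = R.tailP j) : i = j := by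
  have := congrArg (fun p => p.edges.length) h
  simpa using this

/-- Periodicity of the ray with period `pp` above depth `t`. -/
def Per (R : Ray G) (pp t : ℕ) : Prop := ∀ i, t ≤ i → R.om (i + pp) = R.om i

theorem Per.add {R : Ray G} {pp t : ℕ} (h : R.Per pp t) (k i : ℕ) (hi : t ≤ i) :
    R.om (i + k * pp) = R.om i := by
  induction k with
  | zero => simp
  | succ k ih =>
    rw [show i + (k+1) * pp = (i + k * pp) + pp by ring, h _ (by omega), ih]

theorem Per.om_congr_le {R : Ray G} {pp t : ℕ} (h : R.Per pp t) (hpp : 0 < pp) {i j : ℕ}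
    (hj : t ≤ j) (hij : j ≤ i) (hd : (pp : ℤ) ∣ (i : ℤ) - (j : ℤ)) : R.om i = R.om j := by
  obtain ⟨z, hz⟩ := hd
  have hz0 : 0 ≤ z := by
    by_contra h0
    push_neg at h0
    have h1 : (pp:ℤ) * z < 0 := mul_neg_of_pos_of_neg (by exact_mod_cast hpp) h0
    have h2 : (0:ℤ) ≤ (i:ℤ) - j := by
      have : (j:ℤ) ≤ i := by exact_mod_cast hij
      omega
    omega
  have hk : i = j + z.toNat * pp := by
    have hzz : (z.toNat : ℤ) = z := Int.toNat_of_nonneg hz0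
    have : (i:ℤ) = (j:ℤ) + (z.toNat:ℤ) * pp := by rw [hzz]; linarith
    exact_mod_cast this
  rw [hk]
  exact h.add z.toNat j hj

theorem Per.om_congr {R : Ray G} {pp t : ℕ} (h : R.Per pp t) (hpp : 0 < pp) {i j : ℕ}
    (hi : t ≤ i) (hj : t ≤ j) (hd : (pp : ℤ) ∣ (i : ℤ) - (j : ℤ)) : R.om i = R.om j := by
  rcases le_total j i with hij | hij
  · exact h.om_congr_le hpp hj hij hd
  · exact (h.om_congr_le hpp hi hij (by
      rw [show (j:ℤ) - (i:ℤ) = -((i:ℤ) - (j:ℤ)) by ring]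
      exact dvd_neg.mpr hd)).symm

theorem Per.sig_congr {R : Ray G} {pp t : ℕ} (h : R.Per pp t) (hpp : 0 < pp) {i j : ℕ}
    (hi : t ≤ i) (hj : t ≤ j) (hd : (pp : ℤ) ∣ (i : ℤ) - (j : ℤ)) : R.sig i = R.sig j := by
  rw [← R.tgt_om i, ← R.tgt_om j, h.om_congr hpp hi hj hd]

theorem Per.segEdges_congr {R : Ray G} {pp t : ℕ} (h : R.Per pp t) (hpp : 0 < pp)
    {lo lo' : ℕ} (hlo : t ≤ lo) (hlo' : t ≤ lo')
    (hd : (pp : ℤ) ∣ (lo : ℤ) - (lo' : ℤ)) (n : ℕ) :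
    R.segEdges lo n = R.segEdges lo' n := by
  induction n with
  | zero => rfl
  | succ n ih =>
    show _ :: _ = _ :: _
    rw [ih, h.om_congr hpp (show t ≤ lo + n by omega) (show t ≤ lo' + n by omega)
      (by push_cast; convert hd using 1; ring)]

theorem Per.seg_congr {R : Ray G} {pp t : ℕ} (h : R.Per pp t) (hpp : 0 < pp)
    {lo lo' : ℕ} (hlo : t ≤ lo) (hlo' : t ≤ lo')
    (hd : (pp : ℤ) ∣ (lo : ℤ) - (lo' : ℤ)) (n : ℕ) :
    R.seg lo n = R.seg lo' n :=
  DPath.ext' (h.sig_congr hpp (by omega) (by omega)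
    (by push_cast; convert hd using 1; ring))
    (h.segEdges_congr hpp hlo hlo' hd n)

theorem segEdges_eq_of_om {R R' : Ray G} {lo lo' n : ℕ}
    (h : ∀ x, x < n → R.om (lo + x) = R'.om (lo' + x)) :
    R.segEdges lo n = R'.segEdges lo' n := by
  induction n with
  | zero => rfl
  | succ n ih =>
    show _ :: _ = _ :: _
    rw [h n (by omega), ih (fun x hx => h x (by omega))]

theorem om_eq_of_segEdges {R R' : Ray G} {lo lo' : ℕ} :
    ∀ {n : ℕ}, R.segEdges lo n = R'.segEdges lo' n →
      ∀ x, x < n → R.om (lo + x) = R'.om (lo' + x) := by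
  intro n
  induction n with
  | zero => intro _ x hx; omega
  | succ n ih =>
    intro h x hx
    simp only [segEdges, List.cons.injEq] at h
    obtain ⟨h1, h2⟩ := h
    rcases Nat.lt_succ_iff_lt_or_eq.mp hx with hx' | hx'
    · exact ih h2 x hx'
    · subst hx'; exact h1

theorem seg_take {R : Ray G} (lo n m : ℕ) (h : m ≤ n) :
    (R.segEdges lo n).take m = R.segEdges (lo + (n - m)) m := by
  have := R.segEdges_append lo (n - m) m
  rw [show n - m + m = n by omega] at this
  rw [this, List.take_left' (by simp)]

end Ray

end DGraph


namespace DGraph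

variable {G : DGraph}

theorem rlet_congr {l : List G.E} {i j : ℕ} (h : i = j) {hi : i < l.length} :
    rlet l i hi = rlet l j (h ▸ hi) := by subst h; rfl

namespace Ray

/-- Replace the part of `R` below depth `α` by the path `b`. -/
def glue (R : Ray G) (α : ℕ) (b : G.DPath) (hb : b.first = R.sig α) : Ray G where
  om i := if h : i < b.edges.length then rlet b.edges i h else R.om (i - b.edges.length + α)
  v0 := b.last
  coh0 := by
    by_cases h : 0 < b.edges.length
    · rw [dif_pos h]
      exact tgt_rlet_zero h
    · rw [dif_neg (by omega)]
      have hb0 : b.edges = [] := List.length_eq_zero_iff.mp (by omega)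
      have hlast : b.last = b.first := by unfold DPath.last; rw [hb0]; rfl
      show G.tgt (R.om (0 - b.edges.length + α)) = b.last
      rw [show 0 - b.edges.length + α = α by omega, R.tgt_om, hlast, hb]
  coh := by
    intro i
    by_cases h1 : i + 1 < b.edges.length
    · rw [dif_pos h1, dif_pos (show i < b.edges.length by omega)]
      exact tgt_rlet_succ b.wf h1
    · by_cases h2 : i < b.edges.length
      · rw [dif_neg h1, dif_pos h2]
        show G.tgt (R.om (i + 1 - b.edges.length + α)) = _
        rw [show i + 1 - b.edges.length + α = α by omega, R.tgt_om, ← hb]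
        rw [rlet_congr (show i = b.edges.length - 1 by omega)]
        exact (src_rlet_last b.wf (by omega)).symm
      · rw [dif_neg h1, dif_neg h2]
        show G.tgt (R.om (i + 1 - b.edges.length + α)) = _
        rw [show i + 1 - b.edges.length + α = (i - b.edges.length + α) + 1 by omega]
        exact R.coh _

theorem glue_om_low (R : Ray G) (α : ℕ) (b : G.DPath) (hb : b.first = R.sig α)
    {i : ℕ} (h : i < b.edges.length) :
    (R.glue α b hb).om i = rlet b.edges i h := dif_pos h

theorem glue_om_high (R : Ray G) (α : ℕ) (b : G.DPath) (hb : b.first = R.sig α) (y : ℕ) :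
    (R.glue α b hb).om (b.edges.length + y) = R.om (α + y) := by
  show dite _ _ _ = _
  rw [dif_neg (by omega)]
  congr 1
  omega

theorem segEdges_eq_drop {R : Ray G} {l : List G.E} {n : ℕ} (hn : n ≤ l.length)
    (h : ∀ i (hi : i < n), R.om i = rlet l i (by omega)) :
    R.segEdges 0 n = l.drop (l.length - n) := by
  induction n with
  | zero => simp [segEdges]
  | succ n ih =>
    show R.om (0 + n) :: R.segEdges 0 n = _
    rw [Nat.zero_add, ih (by omega) (fun i hi => h i (by omega)), h n (by omega)]
    rw [List.drop_eq_getElem_cons (show l.length - (n+1) < l.length by omega)]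
    unfold rlet
    rw [getElem_congr' (show l.length - 1 - n = l.length - (n+1) by omega),
      show l.length - n = l.length - (n+1) + 1 by omega]

theorem glue_tailP (R : Ray G) (α : ℕ) (b : G.DPath) (hb : b.first = R.sig α) :
    (R.glue α b hb).tailP b.edges.length = b := by
  have he : (R.glue α b hb).segEdges 0 b.edges.length = b.edges := by
    have := segEdges_eq_drop (R := R.glue α b hb) (l := b.edges) (le_refl _)
      (fun i hi => glue_om_low R α b hb hi)
    simpa using this
  refine DPath.ext' ?_ he
  rcases Nat.eq_zero_or_pos b.edges.length with h0 | h0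
  · have hb0 : b.edges = [] := List.length_eq_zero_iff.mp h0
    rw [tailP_first, h0]
    show b.last = b.first
    unfold DPath.last
    rw [hb0]
    rfl
  · rw [tailP_first]
    obtain ⟨m, hm⟩ : ∃ m, b.edges.length = m + 1 := ⟨b.edges.length - 1, by omega⟩
    rw [hm]
    show G.src ((R.glue α b hb).om m) = b.first
    rw [glue_om_low R α b hb (show m < b.edges.length by omega),
      rlet_congr (show m = b.edges.length - 1 by omega)]
    exact src_rlet_last b.wf h0

theorem glue_sig_high (R : Ray G) (α : ℕ) (b : G.DPath) (hb : b.first = R.sig α) (y : ℕ) :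
    (R.glue α b hb).sig (b.edges.length + y) = R.sig (α + y) := by
  cases y with
  | zero =>
    rw [Nat.add_zero, Nat.add_zero]
    have h := congrArg DPath.first (glue_tailP R α b hb)
    rw [tailP_first] at h
    rw [h, hb]
  | succ y =>
    show G.src ((R.glue α b hb).om (b.edges.length + y)) = G.src (R.om (α + y))
    rw [glue_om_high]

theorem glue_seg_high (R : Ray G) (α : ℕ) (b : G.DPath) (hb : b.first = R.sig α) (y n : ℕ) :
    (R.glue α b hb).seg (b.edges.length + y) n = R.seg (α + y) n := by
  refine DPath.ext' ?_ ?_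
  · show (R.glue α b hb).sig (b.edges.length + y + n) = R.sig (α + y + n)
    rw [show b.edges.length + y + n = b.edges.length + (y + n) by omega, glue_sig_high,
      Nat.add_assoc]
  · refine segEdges_eq_of_om (fun x hx => ?_)
    show (R.glue α b hb).om (b.edges.length + y + x) = _
    rw [show b.edges.length + y + x = b.edges.length + (y + x) by omega, glue_om_high,
      Nat.add_assoc]

end Ray

end DGraph

namespace GIS

open DGraph

variable {G : DGraph}

theorem zero_mul' (x : GIS G) : (zero : GIS G) * x = zero := rfl

theorem mul_zero' (x : GIS G) : x * (zero : GIS G) = zero := by cases x <;> rfl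

theorem pair_ne_zero {a b : G.DPath} {h : a.first = b.first} :
    (pair a b h : GIS G) ≠ zero := fun hh => by cases hh

theorem pair_inj {a b a' b' : G.DPath} {h : a.first = b.first} {h' : a'.first = b'.first}
    (he : (pair a b h : GIS G) = pair a' b' h') : a = a' ∧ b = b' := by
  injection he with h1 h2
  exact ⟨h1, h2⟩

theorem pair_congr {a b a' b' : G.DPath} {h : a.first = b.first} {h' : a'.first = b'.first}
    (ha : a = a') (hb : b = b') : (pair a b h : GIS G) = pair a' b' h' := by
  subst ha; subst hb; rfl

theorem mul_pair_suff {t u v w : G.DPath} {h1 : t.first = u.first} {h2 : v.first = w.first}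
    (hs : v.IsSuffixOf u) :
    (pair t u h1 : GIS G) * pair v w h2 =
      pair t ⟨t.first, u.edges.take (u.edges.length - v.edges.length) ++ w.edges,
        by rw [h1]; exact G.isWalk_chopAppend hs h2⟩ rfl := by
  show GIS.mul _ _ = _
  simp only [GIS.mul]
  rw [dif_pos hs]

theorem mul_pair_suff' {t u v w : G.DPath} {h1 : t.first = u.first} {h2 : v.first = w.first}
    (hs' : u.IsSuffixOf v) (hlt : u.edges.length < v.edges.length) :
    (pair t u h1 : GIS G) * pair v w h2 =
      pair ⟨v.first, v.edges.take (v.edges.length - u.edges.length) ++ t.edges,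
        G.isWalk_chopAppend hs' h1.symm⟩ w h2 := by
  have hns : ¬ v.IsSuffixOf u := fun hc => by have := hc.length_le; omega
  show GIS.mul _ _ = _
  simp only [GIS.mul]
  rw [dif_neg hns, dif_pos hs']

theorem mul_zero_of_not {u v : G.DPath} (h1 : ¬ v.IsSuffixOf u) (h2 : ¬ u.IsSuffixOf v)
    {t w : G.DPath} {ht : t.first = u.first} {hw : v.first = w.first} :
    (GIS.pair t u ht : GIS G) * GIS.pair v w hw = zero := by
  show GIS.mul _ _ = _
  simp only [GIS.mul]
  rw [dif_neg h1, dif_neg h2]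

theorem mul_cases (t u v w : G.DPath) (h1 : t.first = u.first) (h2 : v.first = w.first) :
    (pair t u h1 : GIS G) * pair v w h2 = zero ∨ v.IsSuffixOf u ∨ u.IsSuffixOf v := by
  by_cases hs : v.IsSuffixOf u
  · exact Or.inr (Or.inl hs)
  · by_cases hs' : u.IsSuffixOf v
    · exact Or.inr (Or.inr hs')
    · refine Or.inl ?_
      show GIS.mul _ _ = _
      simp only [GIS.mul]
      rw [dif_neg hs, dif_neg hs']

theorem inv_pair {a b : G.DPath} {h : a.first = b.first} :
    (pair a b h : GIS G).inv = pair b a h.symm := rfl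

theorem pair_idem (Z : G.DPath) : (pair Z Z rfl : GIS G) * pair Z Z rfl = pair Z Z rfl := by
  rw [mul_pair_suff (DPath.suffix_refl Z)]
  exact pair_congr rfl (DPath.ext' rfl (by simp))

theorem idem_pair {Z W : G.DPath} {h : Z.first = W.first}
    (hi : (pair Z W h : GIS G) * pair Z W h = pair Z W h) : Z = W := by
  rcases mul_cases Z W Z W h h with h0 | hs | hs'
  · rw [h0] at hi
    exact absurd hi.symm pair_ne_zero
  · rw [mul_pair_suff hs] at hi
    obtain ⟨-, he⟩ := pair_inj hi
    have hlen := congrArg (fun p : G.DPath => p.edges.length) he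
    simp [List.length_take] at hlen
    exact hs.eq_of_length (by have := hs.length_le; omega)
  · rcases eq_or_lt_of_le hs'.length_le with heq | hlt
    · exact (hs'.eq_of_length heq).symm
    · rw [mul_pair_suff' hs' hlt] at hi
      obtain ⟨hA, -⟩ := pair_inj hi
      have hlen := congrArg (fun p : G.DPath => p.edges.length) hA
      simp [List.length_take] at hlen
      omega

theorem le_intro {X' Y' X Y : G.DPath} {h' : X'.first = Y'.first} {h : X.first = Y.first}
    (hs : X.IsSuffixOf X')
    (he : Y'.edges = X'.edges.take (X'.edges.length - X.edges.length) ++ Y.edges) :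
    GIS.le (pair X' Y' h' : GIS G) (pair X Y h) := by
  refine ⟨pair X' X' rfl, pair_idem X', ?_⟩
  rw [mul_pair_suff hs]
  exact pair_congr rfl (DPath.ext' h'.symm he)

end GIS


open DGraph in
/-- The set of pairs of tails of a ray, with lengths congruent mod `pp` above `t`. -/
def raySet (G : DGraph) (R : G.Ray) (pp t : ℕ) : Set (GIS G) :=
  {x | ∃ (i j : ℕ) (hσ : (R.tailP i).first = (R.tailP j).first),
      x = GIS.pair (R.tailP i) (R.tailP j) hσ ∧
        (i = j ∨ (t ≤ i ∧ t ≤ j ∧ (pp : ℤ) ∣ (i : ℤ) - (j : ℤ)))}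

namespace DGraph

variable {G : DGraph}

theorem mem_raySet_idem (R : G.Ray) (pp t i : ℕ) :
    GIS.pair (R.tailP i) (R.tailP i) rfl ∈ raySet G R pp t :=
  ⟨i, i, rfl, rfl, Or.inl rfl⟩

theorem zero_not_mem_raySet {R : G.Ray} {pp t : ℕ} : GIS.zero ∉ raySet G R pp t := by
  rintro ⟨i, j, hσ, he, -⟩
  exact GIS.pair_ne_zero he.symm

theorem mod_eq_of_dvd {pp i j t : ℕ} (hi : t ≤ i) (hj : t ≤ j)
    (hd : (pp : ℤ) ∣ (i : ℤ) - (j : ℤ)) : (i - t) % pp = (j - t) % pp := by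
  refine Nat.modEq_iff_dvd.mpr ?_
  have e1 : ((i - t : ℕ) : ℤ) = (i : ℤ) - t := by omega
  have e2 : ((j - t : ℕ) : ℤ) = (j : ℤ) - t := by omega
  rw [e1, e2, show (j:ℤ) - t - ((i:ℤ) - t) = -((i:ℤ) - j) by ring]
  exact dvd_neg.mpr hd

theorem powEdges_eq_segEdges {R : G.Ray} {pp t : ℕ} (hPer : R.Per pp t) (hpp : 0 < pp)
    {p : G.DPath} (hp : R.seg t pp = p) (r : ℕ) :
    powEdges p r = R.segEdges t (r * pp) := by
  induction r with
  | zero => simp [powEdges, Ray.segEdges]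
  | succ r ih =>
    have h1 : powEdges p (r+1) = p.edges ++ powEdges p r := by
      unfold powEdges
      rw [List.replicate_succ, List.flatten_cons]
    have h2 := R.segEdges_append t (r * pp) pp
    rw [show r * pp + pp = (r+1) * pp by ring] at h2
    rw [h1, ih, h2]
    congr 1
    have h3 : R.segEdges (t + r * pp) pp = R.segEdges t pp :=
      hPer.segEdges_congr hpp (by omega) (by omega)
        (by push_cast; exact ⟨r, by ring⟩) pp
    rw [h3, ← hp]
    rfl

theorem vpr_tail {R : G.Ray} {pp t : ℕ} (hpp : 0 < pp) (hPer : R.Per pp t)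
    {p d : G.DPath} (hp : R.seg t pp = p) (hd : R.tailP t = d)
    {v a : G.DPath} (hv : v.IsSuffixOf p) (r : ℕ)
    (haf : a.first = v.first)
    (hae : a.edges = v.edges ++ powEdges p r ++ d.edges) :
    a = R.tailP (t + r * pp + v.edges.length) := by
  have hvs : v.IsSuffixOf (R.seg t pp) := by rw [hp]; exact hv
  obtain ⟨hveq, hvle⟩ := Ray.suffix_seg hvs
  set m := v.edges.length with hm
  have hdvd : (pp : ℤ) ∣ ((t + r * pp : ℕ) : ℤ) - (t : ℤ) := by push_cast; exact ⟨r, by ring⟩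
  have hedges : R.segEdges 0 (t + r * pp + m) =
      v.edges ++ powEdges p r ++ d.edges := by
    have e1 := R.segEdges_append 0 (t + r * pp) m
    have e2 := R.segEdges_append 0 t (r * pp)
    rw [Nat.zero_add] at e1 e2
    rw [e1, e2, powEdges_eq_segEdges hPer hpp hp, ← hd]
    have e3 : R.segEdges (t + r * pp) m = R.segEdges t m :=
      hPer.segEdges_congr hpp (by omega) (by omega) hdvd m
    have e4 : v.edges = R.segEdges t m := by
      have := congrArg DPath.edges hveq
      simpa using this
    rw [e3, ← e4, Ray.tailP_edges]
    simp [List.append_assoc]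
  refine DPath.ext' ?_ (by rw [hae, Ray.tailP_edges, hedges])
  rw [haf, hveq, Ray.tailP_first, Ray.seg_first]
  exact (hPer.sig_congr hpp (by omega) (by omega)
    (by push_cast; exact ⟨r, by ring⟩)).symm

theorem tail_decomp {R : G.Ray} {pp t : ℕ} (hpp : 0 < pp) (hPer : R.Per pp t)
    {p d : G.DPath} (hp : R.seg t pp = p) (hd : R.tailP t = d) {i : ℕ} (hi : t ≤ i) :
    ∃ (v : G.DPath) (r : ℕ), v.IsSuffixOf p ∧ (R.tailP i).first = v.first ∧
      (R.tailP i).edges = v.edges ++ powEdges p r ++ d.edges ∧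
      v.edges.length = (i - t) % pp ∧ i = t + r * pp + v.edges.length := by
  have hdm := Nat.div_add_mod (i - t) pp
  set m := (i - t) % pp with hmdef
  set r := (i - t) / pp with hrdef
  have him : i = t + r * pp + m := by rw [Nat.mul_comm]; omega
  refine ⟨R.seg t m, r, ?_, ?_, ?_, by simp, by simp only [Ray.seg_length]; omega⟩
  · rw [← hp]
    exact R.seg_suffix t (le_of_lt (Nat.mod_lt _ hpp))
  · rw [Ray.tailP_first, Ray.seg_first]
    exact hPer.sig_congr hpp (by omega) (by omega)
      ⟨r, by push_cast [him]; ring⟩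
  · have e1 := R.segEdges_append 0 (t + r * pp) m
    have e2 := R.segEdges_append 0 t (r * pp)
    rw [Nat.zero_add] at e1 e2
    have e3 : R.segEdges (t + r * pp) m = R.segEdges t m :=
      hPer.segEdges_congr hpp (by omega) (by omega) (by push_cast; exact ⟨r, by ring⟩) m
    rw [Ray.tailP_edges, him, e1, e2, e3, powEdges_eq_segEdges hPer hpp hp, ← hd,
      Ray.tailP_edges]
    simp [List.append_assoc]

theorem cycleSet_eq_raySet {R : G.Ray} {pp t : ℕ} (hpp : 0 < pp) (hPer : R.Per pp t)
    {p d : G.DPath} (hp : R.seg t pp = p) (hd : R.tailP t = d) :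
    cycleSet G p d = raySet G R pp t := by
  ext x
  constructor
  · rintro (⟨r, s, v, a, bb, h, hv, hxe, haf, hae, hbf, hbe⟩ | ⟨q, hq, hxe⟩)
    · have ha := vpr_tail hpp hPer hp hd hv r haf hae
      have hbb := vpr_tail hpp hPer hp hd hv s hbf hbe
      subst hxe
      refine ⟨t + r * pp + v.edges.length, t + s * pp + v.edges.length, ?_, ?_, ?_⟩
      · rw [← ha, ← hbb]
        exact h
      · exact GIS.pair_congr ha hbb
      · refine Or.inr ⟨by omega, by omega, ⟨(r : ℤ) - s, by push_cast; ring⟩⟩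
    · have hq' : q = R.tailP q.edges.length := by
        have : q.IsSuffixOf (R.tailP t) := by rw [hd]; exact hq
        exact (Ray.suffix_tailP this).1
      subst hxe
      exact ⟨q.edges.length, q.edges.length, by rw [← hq'], GIS.pair_congr hq' hq',
        Or.inl rfl⟩
  · rintro ⟨i, j, hσ, hxe, hij | ⟨hti, htj, hdvd⟩⟩
    · subst hij
      subst hxe
      rcases le_or_gt i t with hit | hit
      · refine Or.inr ⟨R.tailP i, ?_, rfl⟩
        rw [← hd]
        exact R.tailP_suffix hit
      · obtain ⟨v, r, hvp, hf, he, -, hieq⟩ := tail_decomp hpp hPer hp hd (le_of_lt hit)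
        exact Or.inl ⟨r, r, v, R.tailP i, R.tailP i, hσ, hvp, rfl, hf, he, hf, he⟩
    · obtain ⟨v, r, hvp, hf, he, hvm, hieq⟩ := tail_decomp hpp hPer hp hd hti
      obtain ⟨w, s, hwp, hf', he', hwm, hjeq⟩ := tail_decomp hpp hPer hp hd htj
      have hvw : v = w := by
        have h1 : v.edges.length = w.edges.length := by
          rw [hvm, hwm, mod_eq_of_dvd hti htj hdvd]
        have h2 : v.IsSuffixOf (R.seg t pp) := by rw [hp]; exact hvp
        have h3 : w.IsSuffixOf (R.seg t pp) := by rw [hp]; exact hwp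
        rw [(Ray.suffix_seg h2).1, (Ray.suffix_seg h3).1, h1]
      subst hvw
      subst hxe
      exact Or.inl ⟨r, s, v, R.tailP i, R.tailP j, hσ, hvp, rfl, hf, he, hf', he'⟩

theorem glue_tail_first {R : G.Ray} {α : ℕ} {b : G.DPath} (hb : b.first = R.sig α)
    {i : ℕ} (hi : α ≤ i) :
    ((R.glue α b hb).tailP (i - α + b.edges.length)).first = (R.tailP i).first := by
  rw [Ray.tailP_first, Ray.tailP_first,
    show i - α + b.edges.length = b.edges.length + (i - α) by omega,
    Ray.glue_sig_high, show α + (i - α) = i by omega]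

theorem glue_tail_edges {R : G.Ray} {α : ℕ} {b : G.DPath} (hb : b.first = R.sig α)
    {i : ℕ} (hi : α ≤ i) :
    ((R.glue α b hb).tailP (i - α + b.edges.length)).edges =
      R.segEdges α (i - α) ++ b.edges := by
  rw [Ray.tailP_edges, show i - α + b.edges.length = b.edges.length + (i - α) by omega,
    (R.glue α b hb).segEdges_append 0 b.edges.length (i - α)]
  congr 1
  · have h5 := congrArg DPath.edges (Ray.glue_seg_high R α b hb 0 (i - α))
    rw [Nat.add_zero, Nat.add_zero] at h5
    rw [Nat.zero_add]
    exact h5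
  · exact congrArg DPath.edges (Ray.glue_tailP R α b hb)

theorem glue_tail_eq {R : G.Ray} {α : ℕ} {b : G.DPath} (hb : b.first = R.sig α)
    {i : ℕ} (hi : α ≤ i) {X : G.DPath}
    (hXf : X.first = (R.tailP i).first)
    (hXe : X.edges = R.segEdges α (i - α) ++ b.edges) :
    X = (R.glue α b hb).tailP (i - α + b.edges.length) :=
  DPath.ext' (hXf.trans (glue_tail_first hb hi).symm)
    (hXe.trans (glue_tail_edges hb hi).symm)

theorem mul_tail_left {R : G.Ray} {X Y : G.DPath} {u v : ℕ} (huv : v ≤ u)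
    (h1 : X.first = (R.tailP u).first) (h2 : (R.tailP v).first = Y.first) :
    ∃ pf, (GIS.pair X (R.tailP u) h1 : GIS G) * GIS.pair (R.tailP v) Y h2 =
      GIS.pair X ⟨X.first, R.segEdges v (u - v) ++ Y.edges, pf⟩ rfl := by
  have htake : (R.tailP u).edges.take ((R.tailP u).edges.length - (R.tailP v).edges.length)
      = R.segEdges v (u - v) := by
    simp only [Ray.tailP_edges, Ray.length_segEdges]
    have h3 := Ray.seg_take (R := R) 0 u (u - v) (by omega)
    rw [h3, show 0 + (u - (u - v)) = v by omega]
  refine ⟨by rw [← htake, h1]; exact G.isWalk_chopAppend (R.tailP_suffix huv) h2, ?_⟩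
  rw [GIS.mul_pair_suff (R.tailP_suffix huv)]
  exact GIS.pair_congr rfl (DPath.ext' rfl (by dsimp only; rw [htake]))

theorem mul_tail_right {R : G.Ray} {X Y : G.DPath} {u v : ℕ} (huv : u ≤ v)
    (h1 : X.first = (R.tailP u).first) (h2 : (R.tailP v).first = Y.first) :
    ∃ pf, (GIS.pair X (R.tailP u) h1 : GIS G) * GIS.pair (R.tailP v) Y h2 =
      GIS.pair ⟨(R.tailP v).first, R.segEdges u (v - u) ++ X.edges, pf⟩ Y h2 := by
  have htake : (R.tailP v).edges.take ((R.tailP v).edges.length - (R.tailP u).edges.length)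
      = R.segEdges u (v - u) := by
    simp only [Ray.tailP_edges, Ray.length_segEdges]
    have h3 := Ray.seg_take (R := R) 0 v (v - u) (by omega)
    rw [h3, show 0 + (v - (v - u)) = u by omega]
  rcases eq_or_lt_of_le huv with he | hlt
  · subst he
    refine ⟨by rw [← htake]; exact G.isWalk_chopAppend (R.tailP_suffix (le_refl u)) h1.symm, ?_⟩
    rw [GIS.mul_pair_suff (R.tailP_suffix (le_refl u))]
    refine GIS.pair_congr (DPath.ext' h1 ?_) (DPath.ext' (h1.trans h2) ?_)
    · show X.edges = R.segEdges u (u - u) ++ X.edges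
      rw [Nat.sub_self]
      rfl
    · show (R.tailP u).edges.take ((R.tailP u).edges.length - (R.tailP u).edges.length)
        ++ Y.edges = Y.edges
      rw [Nat.sub_self, List.take_zero, List.nil_append]
  · refine ⟨by rw [← htake]; exact G.isWalk_chopAppend (R.tailP_suffix huv) h1.symm, ?_⟩
    rw [GIS.mul_pair_suff' (R.tailP_suffix huv) (by simpa using hlt)]
    refine GIS.pair_congr (DPath.ext' rfl (by dsimp only; rw [htake])) rfl

theorem mu_formula {R : G.Ray} {α : ℕ} {b : G.DPath} (hb : b.first = R.sig α)
    {i j : ℕ} (hi : α ≤ i) (hj : α ≤ j) (hσ : (R.tailP i).first = (R.tailP j).first)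
    (hs : (R.tailP α).first = b.first) :
    (GIS.pair (R.tailP α) b hs : GIS G).inv * GIS.pair (R.tailP i) (R.tailP j) hσ *
      GIS.pair (R.tailP α) b hs =
      GIS.pair ((R.glue α b hb).tailP (i - α + b.edges.length))
        ((R.glue α b hb).tailP (j - α + b.edges.length))
        ((glue_tail_first hb hi).trans (hσ.trans (glue_tail_first hb hj).symm)) := by
  rw [GIS.inv_pair]
  obtain ⟨pf1, he1⟩ := mul_tail_right (R := R) (X := b) (Y := R.tailP j) hi hs.symm hσ
  rw [he1]
  have hfc : (⟨(R.tailP i).first, R.segEdges α (i - α) ++ b.edges, pf1⟩ : G.DPath) =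
      (R.glue α b hb).tailP (i - α + b.edges.length) :=
    glue_tail_eq hb hi rfl rfl
  obtain ⟨pf2, he2⟩ := mul_tail_left (R := R)
    (X := (⟨(R.tailP i).first, R.segEdges α (i - α) ++ b.edges, pf1⟩ : G.DPath))
    (Y := b) hj hσ hs
  rw [he2]
  exact GIS.pair_congr hfc (glue_tail_eq hb hj hσ rfl)

end DGraph


namespace DGraph

variable {G : DGraph}

/-- Shorthand for the index relation in `raySet`. -/
def RRel (pp t a b : ℕ) : Prop := a = b ∨ (t ≤ a ∧ t ≤ b ∧ (pp : ℤ) ∣ (a : ℤ) - (b : ℤ))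

theorem RRel.shift {pp t a b : ℕ} (h : RRel pp t a b) (n : ℕ) :
    RRel pp t (a + n) (b + n) := by
  rcases h with rfl | ⟨h1, h2, h3⟩
  · exact Or.inl rfl
  · refine Or.inr ⟨by omega, by omega, ?_⟩
    have e : ((a + n : ℕ) : ℤ) - ((b + n : ℕ) : ℤ) = (a : ℤ) - b := by push_cast; ring
    rw [e]
    exact h3

theorem RRel.symm' {pp t a b : ℕ} (h : RRel pp t a b) : RRel pp t b a := by
  rcases h with rfl | ⟨h1, h2, h3⟩
  · exact Or.inl rfl
  · exact Or.inr ⟨h2, h1, by rw [show (b:ℤ) - a = -((a:ℤ) - b) by ring]; exact dvd_neg.mpr h3⟩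

theorem sig_congr' {R : G.Ray} {pp t : ℕ} (hPer : R.Per pp t) (hpp : 0 < pp) {a b : ℕ}
    (h : RRel pp t a b) : R.sig a = R.sig b := by
  rcases h with rfl | ⟨h1, h2, h3⟩
  · rfl
  · exact hPer.sig_congr hpp h1 h2 h3

theorem segEdges_congr' {R : G.Ray} {pp t : ℕ} (hPer : R.Per pp t) (hpp : 0 < pp) {a b : ℕ}
    (h : RRel pp t a b) (n : ℕ) : R.segEdges a n = R.segEdges b n := by
  rcases h with rfl | ⟨h1, h2, h3⟩
  · rfl
  · exact hPer.segEdges_congr hpp h1 h2 h3 n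

theorem mem_raySet_iff {R : G.Ray} {pp t : ℕ} {x : GIS G} :
    x ∈ raySet G R pp t ↔ ∃ (i j : ℕ) (hσ : (R.tailP i).first = (R.tailP j).first),
      x = GIS.pair (R.tailP i) (R.tailP j) hσ ∧ RRel pp t i j := Iff.rfl

/-- The product of the glued path in `mul_tail_left` with a tail, as a tail. -/
theorem raySet_mul {R : G.Ray} {pp t : ℕ} (hpp : 0 < pp) (hPer : R.Per pp t)
    {x y : GIS G} (hx : x ∈ raySet G R pp t) (hy : y ∈ raySet G R pp t) :
    x * y ∈ raySet G R pp t := by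
  obtain ⟨i, j, hσ, rfl, hc⟩ := hx
  obtain ⟨i', j', hσ', rfl, hc'⟩ := hy
  rcases le_total i' j with h1 | h1
  · obtain ⟨pf, he⟩ := mul_tail_left (R := R) (X := R.tailP i) (Y := R.tailP j') h1 hσ hσ'
    rw [he]
    have hY : (⟨(R.tailP i).first, R.segEdges i' (j - i') ++ (R.tailP j').edges, pf⟩ : G.DPath)
        = R.tailP (j' + (j - i')) := by
      refine DPath.ext' ?_ ?_
      · show (R.tailP i).first = (R.tailP (j' + (j - i'))).first
        have e1 : R.sig j = R.sig (i' + (j - i')) := by rw [show i' + (j - i') = j by omega]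
        rw [hσ, Ray.tailP_first, Ray.tailP_first, e1]
        exact sig_congr' hPer hpp (RRel.shift hc' (j - i'))
      · show R.segEdges i' (j - i') ++ (R.tailP j').edges = _
        rw [Ray.tailP_edges, Ray.tailP_edges,
          R.segEdges_append 0 j' (j - i'), Nat.zero_add]
        congr 1
        exact segEdges_congr' hPer hpp hc' (j - i')
    have hfirst := congrArg DPath.first hY
    refine ⟨i, j' + (j - i'), hfirst, GIS.pair_congr rfl hY, ?_⟩
    rcases hc with rfl | ⟨hti, htj, hdij⟩
    · rcases hc' with rfl | ⟨hti', htj', hdij'⟩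
      · exact Or.inl (by omega)
      · refine Or.inr ⟨by omega, by omega, ?_⟩
        obtain ⟨z, hz⟩ := hdij'
        refine ⟨z, ?_⟩
        have e : ((j' + (i - i') : ℕ) : ℤ) = (j' : ℤ) + i - i' := by omega
        rw [e]
        linear_combination hz
    · rcases hc' with rfl | ⟨hti', htj', hdij'⟩
      · refine Or.inr ⟨hti, by omega, ?_⟩
        obtain ⟨z, hz⟩ := hdij
        refine ⟨z, ?_⟩
        have e : ((i' + (j - i') : ℕ) : ℤ) = (j : ℤ) := by omega
        rw [e]
        linear_combination hz
      · refine Or.inr ⟨hti, by omega, ?_⟩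
        obtain ⟨z1, hz1⟩ := hdij
        obtain ⟨z2, hz2⟩ := hdij'
        refine ⟨z1 + z2, ?_⟩
        have e : ((j' + (j - i') : ℕ) : ℤ) = (j' : ℤ) + j - i' := by omega
        rw [e]
        push_cast
        linear_combination hz1 + hz2
  · obtain ⟨pf, he⟩ := mul_tail_right (R := R) (X := R.tailP i) (Y := R.tailP j') h1 hσ hσ'
    rw [he]
    have hY : (⟨(R.tailP i').first, R.segEdges j (i' - j) ++ (R.tailP i).edges, pf⟩ : G.DPath)
        = R.tailP (i + (i' - j)) := by
      refine DPath.ext' ?_ ?_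
      · show (R.tailP i').first = (R.tailP (i + (i' - j))).first
        have e1 : R.sig i' = R.sig (j + (i' - j)) := by rw [show j + (i' - j) = i' by omega]
        rw [Ray.tailP_first, Ray.tailP_first, e1]
        exact sig_congr' hPer hpp (RRel.shift (RRel.symm' hc) (i' - j))
      · show R.segEdges j (i' - j) ++ (R.tailP i).edges = _
        rw [Ray.tailP_edges, Ray.tailP_edges,
          R.segEdges_append 0 i (i' - j), Nat.zero_add]
        congr 1
        exact segEdges_congr' hPer hpp (RRel.symm' hc) (i' - j)
    have hfirst : (R.tailP (i + (i' - j))).first = (R.tailP j').first :=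
      (congrArg DPath.first hY).symm.trans hσ'
    refine ⟨i + (i' - j), j', hfirst, GIS.pair_congr hY rfl, ?_⟩
    rcases hc with rfl | ⟨hti, htj, hdij⟩
    · rcases hc' with rfl | ⟨hti', htj', hdij'⟩
      · exact Or.inl (by omega)
      · refine Or.inr ⟨by omega, htj', ?_⟩
        obtain ⟨z, hz⟩ := hdij'
        refine ⟨z, ?_⟩
        have e : ((i + (i' - i) : ℕ) : ℤ) = (i' : ℤ) := by omega
        rw [e]
        linear_combination hz
    · rcases hc' with rfl | ⟨hti', htj', hdij'⟩
      · refine Or.inr ⟨by omega, by omega, ?_⟩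
        obtain ⟨z, hz⟩ := hdij
        refine ⟨z, ?_⟩
        have e : ((i + (i' - j) : ℕ) : ℤ) = (i : ℤ) + i' - j := by omega
        rw [e]
        linear_combination hz
      · refine Or.inr ⟨by omega, htj', ?_⟩
        obtain ⟨z1, hz1⟩ := hdij
        obtain ⟨z2, hz2⟩ := hdij'
        refine ⟨z1 + z2, ?_⟩
        have e : ((i + (i' - j) : ℕ) : ℤ) = (i : ℤ) + i' - j := by omega
        rw [e]
        push_cast
        linear_combination hz1 + hz2

theorem raySet_inv {R : G.Ray} {pp t : ℕ} {x : GIS G} (hx : x ∈ raySet G R pp t) :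
    x.inv ∈ raySet G R pp t := by
  obtain ⟨i, j, hσ, rfl, hc⟩ := hx
  rw [GIS.inv_pair]
  exact ⟨j, i, hσ.symm, rfl, RRel.symm' hc⟩

theorem per_extend {R : G.Ray} {pp t : ℕ} (hpp : 0 < pp) (hPer : R.Per pp t)
    (hmin : t = 0 ∨ R.om (t - 1 + pp) ≠ R.om (t - 1))
    {c M L : ℕ} (hM : 0 < M) (hdvd : (pp : ℤ) ∣ (M : ℤ))
    (h : ∀ x, x < L → R.om (c + x) = R.om (c + M + x)) (hL : t ≤ c + L) : t ≤ c := by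
  by_contra hcon
  push_neg at hcon
  rcases hmin with h0 | hne
  · omega
  apply hne
  have hx : t - 1 - c < L := by omega
  have h1 := h (t - 1 - c) hx
  rw [show c + (t - 1 - c) = t - 1 by omega,
    show c + M + (t - 1 - c) = t - 1 + M by omega] at h1
  have h2 : R.om (t - 1 + pp) = R.om (t - 1 + M) := by
    refine hPer.om_congr hpp (by omega) (by omega) ?_
    obtain ⟨z, hz⟩ := hdvd
    refine ⟨1 - z, ?_⟩
    have e : ((t - 1 + pp : ℕ) : ℤ) - ((t - 1 + M : ℕ) : ℤ) = (pp : ℤ) - M := by omega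
    rw [e, hz]
    ring
  rw [h2, ← h1]

theorem raySet_up {R : G.Ray} {pp t : ℕ} (hpp : 0 < pp) (hPer : R.Per pp t)
    (hmin : t = 0 ∨ R.om (t - 1 + pp) ≠ R.om (t - 1))
    {x s : GIS G} (hx : x ∈ raySet G R pp t) (hle : GIS.le x s) :
    s ∈ raySet G R pp t := by
  obtain ⟨u, v, hσ, rfl, hc⟩ := hx
  obtain ⟨e, heid, hes⟩ := hle
  cases e with
  | zero => rw [GIS.zero_mul'] at hes; exact absurd hes GIS.pair_ne_zero
  | pair Z W hZW =>
    have hZW' : Z = W := GIS.idem_pair heid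
    subst hZW'
    cases s with
    | zero => rw [GIS.mul_zero'] at hes; exact absurd hes GIS.pair_ne_zero
    | pair X Y hXY =>
      rcases GIS.mul_cases Z Z X Y hZW hXY with h0 | hs | hs'
      · rw [h0] at hes
        exact absurd hes GIS.pair_ne_zero
      · -- X is a suffix of Z
        rw [GIS.mul_pair_suff hs] at hes
        obtain ⟨hZu, hYv⟩ := GIS.pair_inj hes
        -- Z = tailP u
        have hZ : Z = R.tailP u := hZu.symm
        subst hZ
        obtain ⟨hXt, hXle⟩ := Ray.suffix_tailP hs
        set nX := X.edges.length with hnX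
        have htake : (R.tailP u).edges.take ((R.tailP u).edges.length - X.edges.length)
            = R.segEdges nX (u - nX) := by
          simp only [Ray.tailP_edges, Ray.length_segEdges, ← hnX]
          have h3 := Ray.seg_take (R := R) 0 u (u - nX) (by omega)
          rw [h3, show 0 + (u - (u - nX)) = nX by omega]
        set nY := Y.edges.length with hnY
        have hvlen : v = (u - nX) + nY := by
          have h8 := congrArg (fun p : G.DPath => p.edges.length) hYv
          simp only [Ray.tailP_length, List.length_append, List.length_take,
            Ray.length_segEdges] at h8
          omega
        have hYedges : R.segEdges nX (u - nX) ++ Y.edges = R.segEdges 0 v := by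
          have h9 := congrArg DPath.edges hYv
          dsimp only at h9
          rw [← htake]
          exact h9.symm
        have hsplit := R.segEdges_append 0 nY (u - nX)
        rw [Nat.zero_add, show nY + (u - nX) = v by omega] at hsplit
        have hinj := List.append_inj (hYedges.trans hsplit) (by simp)
        -- hinj.1 : segEdges nX (u - nX) = segEdges nY (u - nX), hinj.2 : Y.edges = segEdges 0 nY
        have homeq := Ray.om_eq_of_segEdges hinj.1
        have hYt : Y = R.tailP nY := by
          refine DPath.ext' ?_ (by rw [hinj.2]; rfl)
          rw [← hXY, hXt, Ray.tailP_first, Ray.tailP_first]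
          rcases Nat.eq_zero_or_pos (u - nX) with hz | hz
          · have h10 : nY = v := by omega
            have h11 : nX = u := by omega
            rw [h10, h11]
            simpa [Ray.tailP_first] using hσ
          · have h12 := homeq 0 hz
            rw [Nat.add_zero, Nat.add_zero] at h12
            rw [← R.tgt_om nX, ← R.tgt_om nY, h12]
        refine ⟨nX, nY, by rw [← hXt, ← hYt]; exact hXY, GIS.pair_congr hXt hYt, ?_⟩
        rcases hc with huv | ⟨htu, htv, hduv⟩
        · exact Or.inl (by omega)
        · rcases Nat.lt_trichotomy u v with hult | heq | hvlt
          · -- v > u : nY > nX ; c := nX, M := v - u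
            have hM : nY = nX + (v - u) := by omega
            have htnX : t ≤ nX := by
              refine per_extend hpp hPer hmin (by omega) ?_
                (c := nX) (M := v - u) (L := u - nX) ?_ (by omega)
              · obtain ⟨z, hz⟩ := hduv
                refine ⟨-z, ?_⟩
                have e : ((v - u : ℕ) : ℤ) = -((u : ℤ) - v) := by omega
                rw [e, hz]
                ring
              · intro xx hxx
                rw [show nX + (v - u) + xx = nY + xx by omega]
                exact homeq xx hxx
            refine Or.inr ⟨htnX, by omega, ?_⟩
            obtain ⟨z, hz⟩ := hduv
            refine ⟨z, ?_⟩
            have e : (nX : ℤ) - (nY : ℤ) = (u : ℤ) - v := by omega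
            rw [e, hz]
          · exact Or.inl (by omega)
          · -- u > v : nX > nY ; c := nY, M := u - v
            have hM : nX = nY + (u - v) := by omega
            have htnY : t ≤ nY := by
              refine per_extend hpp hPer hmin (by omega) ?_
                (c := nY) (M := u - v) (L := u - nX) ?_ (by omega)
              · obtain ⟨z, hz⟩ := hduv
                refine ⟨z, ?_⟩
                have e : ((u - v : ℕ) : ℤ) = (u : ℤ) - v := by omega
                rw [e, hz]
              · intro xx hxx
                rw [show nY + (u - v) + xx = nX + xx by omega]
                exact (homeq xx hxx).symm
            refine Or.inr ⟨by omega, htnY, ?_⟩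
            obtain ⟨z, hz⟩ := hduv
            refine ⟨z, ?_⟩
            have e : (nX : ℤ) - (nY : ℤ) = (u : ℤ) - v := by omega
            rw [e, hz]
      · -- Z is a suffix of X : e * s = s
        rcases eq_or_lt_of_le hs'.length_le with heq | hlt
        · have : Z = X := hs'.eq_of_length heq
          subst this
          rw [GIS.mul_pair_suff (DPath.suffix_refl Z)] at hes
          obtain ⟨hZu, hYv⟩ := GIS.pair_inj hes
          refine ⟨u, v, hσ, ?_, hc⟩
          refine GIS.pair_congr hZu.symm ?_
          refine (hYv.trans (DPath.ext' ?_ ?_)).symm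
          · show Z.first = Y.first
            exact hXY
          · show Z.edges.take (Z.edges.length - Z.edges.length) ++ Y.edges = Y.edges
            rw [Nat.sub_self, List.take_zero, List.nil_append]
        · rw [GIS.mul_pair_suff' hs' hlt] at hes
          obtain ⟨hZu, hYv⟩ := GIS.pair_inj hes
          obtain ⟨l, hl, -⟩ := id hs'
          have hXe : X.edges.take (X.edges.length - Z.edges.length) ++ Z.edges = X.edges := by
            rw [hl, show (l ++ Z.edges).length - Z.edges.length = l.length by simp,
              List.take_left]
          refine ⟨u, v, hσ, ?_, hc⟩
          refine GIS.pair_congr ?_ hYv.symm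
          refine (hZu.trans ?_).symm
          refine DPath.ext' rfl hXe
  
theorem raySet_CISS {R : G.Ray} {pp t : ℕ} (hpp : 0 < pp) (hPer : R.Per pp t)
    (hmin : t = 0 ∨ R.om (t - 1 + pp) ≠ R.om (t - 1)) : IsCISS G (raySet G R pp t) :=
  ⟨⟨_, mem_raySet_idem R pp t 0⟩, fun _ ha _ hb => raySet_mul hpp hPer ha hb,
   fun _ ha => raySet_inv ha, fun _ ha _ hle => raySet_up hpp hPer hmin ha hle⟩

end DGraph


namespace GIS

open DGraph

variable {G : DGraph}

theorem mul_pair_suff2 {t u v w : G.DPath} {h1 : t.first = u.first} {h2 : v.first = w.first}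
    (hs' : u.IsSuffixOf v) :
    (pair t u h1 : GIS G) * pair v w h2 =
      pair ⟨v.first, v.edges.take (v.edges.length - u.edges.length) ++ t.edges,
        G.isWalk_chopAppend hs' h1.symm⟩ w h2 := by
  rcases eq_or_lt_of_le hs'.length_le with heq | hlt
  · have huv : u = v := hs'.eq_of_length heq
    subst huv
    rw [mul_pair_suff (DPath.suffix_refl u)]
    refine GIS.pair_congr (DPath.ext' h1 ?_) (DPath.ext' (h1.trans h2) ?_)
    · show t.edges = u.edges.take (u.edges.length - u.edges.length) ++ t.edges
      rw [Nat.sub_self, List.take_zero, List.nil_append]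
    · show u.edges.take (u.edges.length - u.edges.length) ++ w.edges = w.edges
      rw [Nat.sub_self, List.take_zero, List.nil_append]
  · exact mul_pair_suff' hs' hlt

end GIS

namespace DGraph

variable {G : DGraph}

theorem isWalk_take {v : G.V} {l : List G.E} (hw : G.IsWalk v l) (n : ℕ) :
    G.IsWalk v (l.take n) := by
  induction l generalizing v n with
  | nil => simp
  | cons e tl ih =>
    cases n with
    | zero => simp
    | succ m => exact ⟨hw.1, ih hw.2 m⟩

/-- The key mixed-length case of the classification machine. -/
theorem machine_mixed {R1 : G.Ray} {pp t1 : ℕ} (hpp : 0 < pp) (hPer1 : R1.Per pp t1)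
    {α : ℕ} {b : G.DPath} (hb : b.first = R1.sig α) (hs : (R1.tailP α).first = b.first)
    {X Y : G.DPath} {hXY : X.first = Y.first}
    (hconj : GIS.pair (R1.tailP α) b hs * GIS.pair X Y hXY *
      (GIS.pair (R1.tailP α) b hs).inv ∈ raySet G R1 pp t1)
    (hYlt : Y.edges.length < b.edges.length) (hXge : b.edges.length ≤ X.edges.length) :
    X = (R1.glue α b hb).tailP X.edges.length ∧
    Y = (R1.glue α b hb).tailP Y.edges.length ∧
    (R1.glue α b hb).Per pp Y.edges.length ∧
    (pp : ℤ) ∣ (X.edges.length : ℤ) - (Y.edges.length : ℤ) := by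
  set R2 := R1.glue α b hb with hR2
  set lb := b.edges.length with hlb
  set nX := X.edges.length with hnX
  set nY := Y.edges.length with hnY
  have hbX : b.IsSuffixOf X := by
    rcases GIS.mul_cases (R1.tailP α) b X Y hs hXY with h0 | hsf | hsf
    · exfalso
      rw [h0, GIS.zero_mul'] at hconj
      exact zero_not_mem_raySet hconj
    · have hXb : X = b := hsf.eq_of_length (by have := hsf.length_le; omega)
      rw [hXb]
      exact DPath.suffix_refl b
    · exact hsf
  rw [GIS.mul_pair_suff2 hbX, GIS.inv_pair] at hconj
  have hYb : Y.IsSuffixOf b := by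
    by_cases hc2 : Y.IsSuffixOf b
    · exact hc2
    by_cases hc1 : b.IsSuffixOf Y
    · exfalso
      apply hc2
      have hYeq : b = Y := hc1.eq_of_length (by have := hc1.length_le; omega)
      rw [← hYeq]
      exact DPath.suffix_refl b
    · exfalso
      rw [GIS.mul_zero_of_not hc1 hc2] at hconj
      exact zero_not_mem_raySet hconj
  rw [GIS.mul_pair_suff2 hYb] at hconj
  obtain ⟨I, J, hσIJ, heq, hcond⟩ := hconj
  obtain ⟨hZ1, hA⟩ := GIS.pair_inj heq
  have hJ : α = J := by
    have := congrArg (fun p : G.DPath => p.edges.length) hA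
    simpa using this
  subst hJ
  -- edge lists
  have h9 : b.edges.take (lb - nY) ++ (X.edges.take (nX - lb) ++ (R1.tailP α).edges)
      = R1.segEdges 0 I := by
    have := congrArg DPath.edges hZ1
    dsimp only at this
    exact this
  have hIlen : I = (lb - nY) + ((nX - lb) + α) := by
    have := congrArg List.length h9
    simp only [List.length_append, List.length_take, Ray.tailP_length,
      Ray.length_segEdges] at this
    omega
  have hcond' : t1 ≤ I ∧ t1 ≤ α ∧ (pp : ℤ) ∣ (I : ℤ) - (α : ℤ) := by
    rcases hcond with he | hc
    · exfalso
      omega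
    · exact hc
  have hdvd : (pp : ℤ) ∣ (nX : ℤ) - (nY : ℤ) := by
    obtain ⟨z, hz'⟩ := hcond'.2.2
    refine ⟨z, ?_⟩
    have e : (nX : ℤ) - (nY : ℤ) = (I : ℤ) - (α : ℤ) := by omega
    rw [e, hz']
  -- splits
  have hsplit1 := R1.segEdges_append 0 ((nX - lb) + α) (lb - nY)
  rw [Nat.zero_add] at hsplit1
  have hsplit2 := R1.segEdges_append 0 α (nX - lb)
  rw [Nat.zero_add, show α + (nX - lb) = (nX - lb) + α by omega] at hsplit2
  have h10 : b.edges.take (lb - nY) ++ (X.edges.take (nX - lb) ++ (R1.tailP α).edges)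
      = R1.segEdges ((nX - lb) + α) (lb - nY) ++
        (R1.segEdges α (nX - lb) ++ R1.segEdges 0 α) := by
    rw [h9, show I = ((nX - lb) + α) + (lb - nY) by omega, hsplit1, hsplit2]
  have hinj1 := List.append_inj h10
    (by simp only [List.length_take, Ray.length_segEdges, List.length_append,
      Ray.tailP_length]; omega)
  have hinj2 := List.append_inj hinj1.2
    (by simp only [List.length_take, Ray.length_segEdges, List.length_append,
      Ray.tailP_length]; omega)
  -- X is a tail of R2
  obtain ⟨l, hlX, -⟩ := id hbX
  have hlen_l : l.length = nX - lb := by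
    have := congrArg List.length hlX
    simp at this
    omega
  have hltake : X.edges.take (nX - lb) = l := by
    rw [hlX, show nX - lb = l.length by omega]
    exact List.take_left
  have hXe2 : X.edges = R2.segEdges 0 nX := by
    have e5 := R2.segEdges_append 0 lb (nX - lb)
    rw [Nat.zero_add, show lb + (nX - lb) = nX by omega] at e5
    have e6 : R2.segEdges lb (nX - lb) = R1.segEdges α (nX - lb) := by
      have h7 := congrArg DPath.edges (Ray.glue_seg_high R1 α b hb 0 (nX - lb))
      rw [Nat.add_zero, Nat.add_zero] at h7
      exact h7
    have e7 : R2.segEdges 0 lb = b.edges :=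
      congrArg DPath.edges (Ray.glue_tailP R1 α b hb)
    rw [hlX, ← hltake, hinj2.1, e5, e6, e7]
  have hXtail : X = R2.tailP nX :=
    DPath.ext_ne (by rw [hXe2]; rfl) (by
      have : 0 < nX := by omega
      exact List.ne_nil_of_length_pos (by omega))
  -- Y is a tail of R2
  have hYb2 : Y.IsSuffixOf (R2.tailP lb) := by
    have h8 := Ray.glue_tailP R1 α b hb
    rw [show (R1.glue α b hb).tailP b.edges.length = R2.tailP lb from rfl] at h8
    rw [h8]
    exact hYb
  have hYtail : Y = R2.tailP nY := (Ray.suffix_tailP hYb2).1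
  -- letters of b above nY
  have hbtake : b.edges.take (lb - nY) = R2.segEdges nY (lb - nY) := by
    have e7 : R2.segEdges 0 lb = b.edges :=
      congrArg DPath.edges (Ray.glue_tailP R1 α b hb)
    have h11 := Ray.seg_take (R := R2) 0 lb (lb - nY) (by omega)
    rw [show 0 + (lb - (lb - nY)) = nY by omega] at h11
    rw [← e7, h11]
  have hom : ∀ x, x < lb - nY → R2.om (nY + x) = R1.om ((nX - lb) + α + x) := by
    have := Ray.om_eq_of_segEdges (hbtake.symm.trans hinj1.1)
    exact this
  -- periodicity of R2 above nY
  have hPer2Y : R2.Per pp nY := by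
    intro i hi
    rcases le_or_gt lb i with hil | hil
    · have h1 : R2.om (i + pp) = R1.om (α + (i - lb) + pp) := by
        have h12 := Ray.glue_om_high R1 α b hb ((i - lb) + pp)
        rw [show lb + ((i - lb) + pp) = i + pp by omega,
          show α + ((i - lb) + pp) = α + (i - lb) + pp by omega] at h12
        exact h12
      have h2 : R2.om i = R1.om (α + (i - lb)) := by
        have h12 := Ray.glue_om_high R1 α b hb (i - lb)
        rw [show lb + (i - lb) = i by omega] at h12
        exact h12
      rw [h1, h2]
      exact hPer1 _ (by omega)
    · have h2 : R2.om i = R1.om ((nX - lb) + α + (i - nY)) := by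
        have h12 := hom (i - nY) (by omega)
        rw [show nY + (i - nY) = i by omega] at h12
        exact h12
      rcases le_or_gt lb (i + pp) with hil2 | hil2
      · have h1 : R2.om (i + pp) = R1.om (α + (i + pp - lb)) := by
          have h12 := Ray.glue_om_high R1 α b hb (i + pp - lb)
          rw [show lb + (i + pp - lb) = i + pp by omega] at h12
          exact h12
        rw [h1, h2]
        refine hPer1.om_congr hpp (by omega) (by omega) ?_
        obtain ⟨z, hz'⟩ := hdvd
        refine ⟨1 - z, ?_⟩
        have e : ((α + (i + pp - lb) : ℕ) : ℤ) - (((nX - lb) + α + (i - nY) : ℕ) : ℤ)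
            = (pp : ℤ) - ((nX : ℤ) - (nY : ℤ)) := by omega
        rw [e, hz']
        ring
      · have h1 : R2.om (i + pp) = R1.om ((nX - lb) + α + (i - nY) + pp) := by
          have h12 := hom (i + pp - nY) (by omega)
          rw [show nY + (i + pp - nY) = i + pp by omega,
            show (nX - lb) + α + (i + pp - nY) = (nX - lb) + α + (i - nY) + pp by omega] at h12
          exact h12
        rw [h1, h2]
        exact hPer1 _ (by omega)
  exact ⟨hXtail, hYtail, hPer2Y, hdvd⟩

end DGraph


namespace DGraph

variable {G : DGraph}

theorem xtail_of_take {R1 : G.Ray} {α : ℕ} {b : G.DPath} (hb : b.first = R1.sig α)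
    {X : G.DPath} (hbX : b.IsSuffixOf X)
    (htk : X.edges.take (X.edges.length - b.edges.length)
      = R1.segEdges α (X.edges.length - b.edges.length))
    (hpos : 0 < X.edges.length) :
    X = (R1.glue α b hb).tailP X.edges.length := by
  set R2 := R1.glue α b hb with hR2
  set lb := b.edges.length with hlb
  set nX := X.edges.length with hnX
  have hXlb : lb ≤ nX := hbX.length_le
  obtain ⟨l, hlX, -⟩ := id hbX
  have hlen_l : l.length = nX - lb := by
    have := congrArg List.length hlX
    simp at this
    omega
  have hltake : X.edges.take (nX - lb) = l := by
    rw [hlX, show nX - lb = l.length by omega]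
    exact List.take_left
  have hXe2 : X.edges = R2.segEdges 0 nX := by
    have e5 := R2.segEdges_append 0 lb (nX - lb)
    rw [Nat.zero_add, show lb + (nX - lb) = nX by omega] at e5
    have e6 : R2.segEdges lb (nX - lb) = R1.segEdges α (nX - lb) := by
      have h7 := congrArg DPath.edges (Ray.glue_seg_high R1 α b hb 0 (nX - lb))
      rw [Nat.add_zero, Nat.add_zero] at h7
      exact h7
    have e7 : R2.segEdges 0 lb = b.edges :=
      congrArg DPath.edges (Ray.glue_tailP R1 α b hb)
    rw [hlX, ← hltake, htk, e5, e6, e7]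
  exact DPath.ext_ne (by rw [hXe2]; rfl) (List.ne_nil_of_length_pos (by omega))

theorem machine_rot {R1 : G.Ray} {pp t1 : ℕ} (hpp : 0 < pp) (hPer1 : R1.Per pp t1)
    {α : ℕ} {b : G.DPath} (hb : b.first = R1.sig α) {t2 : ℕ}
    (hPer2 : (R1.glue α b hb).Per pp t2) :
    ∃ (u v : G.DPath) (h1 : v.first = u.last) (h2 : u.first = v.last),
      R1.seg t1 pp = G.concatPath u v h1 ∧
        (R1.glue α b hb).seg t2 pp = G.concatPath v u h2 := by
  set R2 := R1.glue α b hb with hR2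
  set lb := b.edges.length with hlb
  set K := lb + t1 + pp + 1 with hK
  set B := t2 + K * pp with hB
  have hKB : lb + t1 + pp + 1 ≤ K * pp := by
    have h1 : K * 1 ≤ K * pp := Nat.mul_le_mul_left K hpp
    have h2 : K * 1 = K := Nat.mul_one K
    omega
  set J0 := B - lb + α - t1 with hJ0
  have hJ0ge : t1 + J0 = B - lb + α := by omega
  have m0 : ∀ y, R2.om (t2 + y) = R1.om (t1 + J0 + y) := by
    intro y
    have h1 := hPer2.add K (t2 + y) (by omega)
    have h2 := Ray.glue_om_high R1 α b hb (B - lb + y)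
    rw [show lb + (B - lb + y) = t2 + y + K * pp by omega] at h2
    rw [← h1, h2, show α + (B - lb + y) = t1 + J0 + y by omega]
  set D := J0 % pp with hD
  set Q := J0 / pp with hQ
  have hQD : pp * Q + D = J0 := Nat.div_add_mod J0 pp
  have hDlt : D < pp := Nat.mod_lt _ hpp
  refine ⟨R1.seg (t1 + D) (pp - D), R1.seg t1 D, ?_, ?_, ?_, ?_⟩
  · rw [Ray.seg_first]
    exact (R1.seg_last (t1 + D) (pp - D)).symm
  · rw [Ray.seg_first, R1.seg_last, show t1 + D + (pp - D) = t1 + pp by omega]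
    exact hPer1.sig_congr hpp (by omega) (by omega) ⟨1, by push_cast; ring⟩
  · refine DPath.ext' ?_ ?_
    · show R1.sig (t1 + pp) = R1.sig (t1 + D + (pp - D))
      rw [show t1 + D + (pp - D) = t1 + pp by omega]
    · show R1.segEdges t1 pp = R1.segEdges (t1 + D) (pp - D) ++ R1.segEdges t1 D
      have h5 := R1.segEdges_append t1 D (pp - D)
      rw [show D + (pp - D) = pp by omega] at h5
      exact h5
  · have hi : ∀ x, x < D → R2.om (t2 + (pp - D) + x) = R1.om (t1 + x) := by
      intro x hx
      have h1 := m0 ((pp - D) + x)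
      rw [show t2 + ((pp - D) + x) = t2 + (pp - D) + x by omega] at h1
      rw [h1]
      have h2 := hPer1.add (Q + 1) (t1 + x) (by omega)
      rw [show t1 + x + (Q + 1) * pp = t1 + J0 + ((pp - D) + x) by
        have e : (Q + 1) * pp = pp * Q + pp := by ring
        omega] at h2
      exact h2
    have hii : ∀ x, x < pp - D → R2.om (t2 + x) = R1.om (t1 + D + x) := by
      intro x hx
      rw [m0 x]
      have h2 := hPer1.add Q (t1 + D + x) (by omega)
      rw [show t1 + D + x + Q * pp = t1 + J0 + x by
        have e : Q * pp = pp * Q := by ring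
        omega] at h2
      exact h2
    refine DPath.ext' ?_ ?_
    · show R2.sig (t2 + pp) = R1.sig (t1 + D)
      rw [← Ray.tgt_om, ← Ray.tgt_om]
      have h1 := m0 pp
      rw [h1]
      have h2 := hPer1.add (Q + 1) (t1 + D) (by omega)
      rw [show t1 + D + (Q + 1) * pp = t1 + J0 + pp by
        have e : (Q + 1) * pp = pp * Q + pp := by ring
        omega] at h2
      rw [h2]
    · show R2.segEdges t2 pp = R1.segEdges t1 D ++ R1.segEdges (t1 + D) (pp - D)
      have happ := R2.segEdges_append t2 (pp - D) D
      rw [show (pp - D) + D = pp by omega] at happ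
      rw [happ, Ray.segEdges_eq_of_om hi, Ray.segEdges_eq_of_om hii]

theorem machine {R1 : G.Ray} {pp t1 : ℕ} (hpp : 0 < pp) (hPer1 : R1.Per pp t1)
    {M : Set (GIS G)} (hM : IsCISS G M) {s : GIS G}
    (hin : ∀ h ∈ raySet G R1 pp t1, s.inv * h * s ∈ M)
    (hout : ∀ m ∈ M, s * m * s.inv ∈ raySet G R1 pp t1) :
    ∃ (R2 : G.Ray) (t2 : ℕ), R2.Per pp t2 ∧
      (t2 = 0 ∨ R2.om (t2 - 1 + pp) ≠ R2.om (t2 - 1)) ∧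
      M = raySet G R2 pp t2 ∧
      ∃ (u v : G.DPath) (h1 : v.first = u.last) (h2 : u.first = v.last),
        R1.seg t1 pp = G.concatPath u v h1 ∧ R2.seg t2 pp = G.concatPath v u h2 := by
  classical
  have hM0 : GIS.zero ∉ M := by
    intro h0
    have h1 := hout _ h0
    rw [GIS.mul_zero', GIS.zero_mul'] at h1
    exact zero_not_mem_raySet h1
  cases s with
  | zero =>
    exfalso
    apply hM0
    have h1 := hin _ (mem_raySet_idem R1 pp t1 0)
    rw [show (GIS.zero : GIS G).inv = GIS.zero from rfl, GIS.zero_mul', GIS.zero_mul'] at h1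
    exact h1
  | pair a b hab =>
    have haT : a = R1.tailP a.edges.length := by
      rcases GIS.mul_cases b a (R1.tailP (a.edges.length + 1)) (R1.tailP (a.edges.length + 1))
          hab.symm rfl with h0 | hsf | hsf
      · exfalso
        apply hM0
        have hmem := hin _ (mem_raySet_idem R1 pp t1 (a.edges.length + 1))
        rw [GIS.inv_pair, h0, GIS.zero_mul'] at hmem
        exact hmem
      · exfalso
        have h2 := hsf.length_le
        simp only [Ray.tailP_length] at h2
        omega
      · exact (Ray.suffix_tailP hsf).1
    have hab2 : (R1.tailP a.edges.length).first = b.first := by rw [← haT]; exact hab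
    rw [(GIS.pair_congr haT rfl :
      GIS.pair a b hab = GIS.pair (R1.tailP a.edges.length) b hab2)] at hin hout
    set α := a.edges.length with hα
    have hb : b.first = R1.sig α := by rw [← hab2, Ray.tailP_first]
    set R2 := R1.glue α b hb with hR2
    set lb := b.edges.length with hlb
    have hPer2_0 : R2.Per pp (lb + (t1 - α)) := by
      intro i hi
      have h1 : R2.om (i + pp) = R1.om (α + (i - lb) + pp) := by
        have h12 := Ray.glue_om_high R1 α b hb ((i - lb) + pp)
        rw [show lb + ((i - lb) + pp) = i + pp by omega,
          show α + ((i - lb) + pp) = α + (i - lb) + pp by omega] at h12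
        exact h12
      have h2 : R2.om i = R1.om (α + (i - lb)) := by
        have h12 := Ray.glue_om_high R1 α b hb (i - lb)
        rw [show lb + (i - lb) = i by omega] at h12
        exact h12
      rw [h1, h2]
      exact hPer1 _ (by omega)
    have hex : ∃ t2, R2.Per pp t2 := ⟨_, hPer2_0⟩
    set t2 := Nat.find hex with ht2def
    have hPer2 : R2.Per pp t2 := Nat.find_spec hex
    have ht2min : ∀ t', R2.Per pp t' → t2 ≤ t' := fun t' h => Nat.find_min' hex h
    have hmin : t2 = 0 ∨ R2.om (t2 - 1 + pp) ≠ R2.om (t2 - 1) := by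
      rcases Nat.eq_zero_or_pos t2 with h0 | h0
      · exact Or.inl h0
      · refine Or.inr fun hcon => ?_
        have hP : R2.Per pp (t2 - 1) := by
          intro i hi
          rcases eq_or_lt_of_le hi with he | hlt2
          · rw [← he]
            exact hcon
          · exact hPer2 i (by omega)
        have := ht2min _ hP
        omega
    -- main sub-lemma for strictly decreasing pairs
    have hmainlt : ∀ (X Y : G.DPath) (hXY : X.first = Y.first), GIS.pair X Y hXY ∈ M →
        Y.edges.length < X.edges.length →
        X = R2.tailP X.edges.length ∧ Y = R2.tailP Y.edges.length ∧
          t2 ≤ Y.edges.length ∧ (pp : ℤ) ∣ (X.edges.length : ℤ) - (Y.edges.length : ℤ) := by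
      intro X Y hXY hm hlt
      have hconj := hout _ hm
      set nX := X.edges.length with hnX
      set nY := Y.edges.length with hnY
      rcases lt_or_ge nX lb with hcase | hcase
      · -- pumping case : nX < lb
        have hXb : X.IsSuffixOf b := by
          rcases GIS.mul_cases (R1.tailP α) b X Y hab2 hXY with h0 | hsf | hsf
          · exfalso
            rw [h0, GIS.zero_mul'] at hconj
            exact zero_not_mem_raySet hconj
          · exact hsf
          · exfalso
            have := hsf.length_le
            omega
        have hXt : X = R2.tailP nX := by
          have h8 : X.IsSuffixOf (R2.tailP lb) := by
            rw [Ray.glue_tailP]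
            exact hXb
          exact (Ray.suffix_tailP h8).1
        have hYX : Y.IsSuffixOf X := by
          have hmm := hM.2.1 _ hm _ hm
          rcases GIS.mul_cases X Y X Y hXY hXY with h0 | hsf | hsf
          · exfalso
            rw [h0] at hmm
            exact hM0 hmm
          · exfalso
            have := hsf.length_le
            omega
          · exact hsf
        have hYt : Y = R2.tailP nY := by
          have h8 : Y.IsSuffixOf (R2.tailP nX) := by rw [← hXt]; exact hYX
          exact (Ray.suffix_tailP h8).1
        obtain ⟨l, hlX, hlf⟩ := id hYX
        have hlen_l : l.length = nX - nY := by
          have := congrArg List.length hlX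
          simp at this
          omega
        have hloop : G.walkEnd X.first l = X.first := by
          rw [← hlf]
          exact hXY.symm
        have hwalkZ : ∀ k, G.IsWalk X.first ((List.replicate k l).flatten ++ X.edges) := by
          intro k
          induction k with
          | zero => simpa using X.wf
          | succ k ih =>
            rw [List.replicate_succ, List.flatten_cons, List.append_assoc, G.isWalk_append]
            refine ⟨?_, ?_⟩
            · have hw := X.wf
              rw [hlX, G.isWalk_append] at hw
              exact hw.1
            · rw [hloop]
              exact ih
        have hZmem : ∀ k, GIS.pair (⟨X.first, (List.replicate k l).flatten ++ X.edges,
            hwalkZ k⟩ : G.DPath) Y hXY ∈ M := by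
          intro k
          induction k with
          | zero =>
            have h7 : (⟨X.first, (List.replicate 0 l).flatten ++ X.edges, hwalkZ 0⟩ : G.DPath)
                = X := DPath.ext' rfl (by simp)
            rw [GIS.pair_congr h7 rfl]
            exact hm
          | succ k ih =>
            have hprod := hM.2.1 _ ih _ hm
            rw [GIS.mul_pair_suff2 hYX] at hprod
            have h7 : (⟨X.first, X.edges.take (X.edges.length - Y.edges.length) ++
                (⟨X.first, (List.replicate k l).flatten ++ X.edges, hwalkZ k⟩ : G.DPath).edges,
                G.isWalk_chopAppend hYX hXY.symm⟩ : G.DPath)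
                = ⟨X.first, (List.replicate (k+1) l).flatten ++ X.edges, hwalkZ (k+1)⟩ := by
              refine DPath.ext' rfl ?_
              show X.edges.take (X.edges.length - Y.edges.length) ++
                ((List.replicate k l).flatten ++ X.edges) = _
              have htk : X.edges.take (X.edges.length - Y.edges.length) = l := by
                rw [hlX, show (l ++ Y.edges).length - Y.edges.length = l.length by simp,
                  List.take_left]
              rw [htk]
              show l ++ ((List.replicate k l).flatten ++ X.edges)
                = (List.replicate (k+1) l).flatten ++ X.edges
              rw [List.replicate_succ, List.flatten_cons, List.append_assoc]
            rw [GIS.pair_congr h7 rfl] at hprod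
            exact hprod
        have hZlen : ∀ k, ((List.replicate k l).flatten ++ X.edges).length
            = nX + k * (nX - nY) := by
          intro k
          simp [List.length_flatten, List.map_replicate, List.sum_replicate, hlen_l,
            smul_eq_mul]
          omega
        have happ : ∀ k, lb ≤ ((List.replicate k l).flatten ++ X.edges).length →
            R2.Per pp nY ∧
            (pp : ℤ) ∣ ((((List.replicate k l).flatten ++ X.edges).length : ℕ) : ℤ) - (nY : ℤ) := by
          intro k hk
          have h5 := machine_mixed hpp hPer1 hb hab2
            (hconj := hout _ (hZmem k)) (by omega) (by exact hk)
          obtain ⟨-, -, hPer2Y, hdvd5⟩ := h5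
          exact ⟨hPer2Y, by simpa using hdvd5⟩
        have hmul1 : lb ≤ lb * (nX - nY) := Nat.le_mul_of_pos_right lb (by omega)
        have hmul2 : lb * (nX - nY) ≤ (lb + 1) * (nX - nY) :=
          Nat.mul_le_mul_right _ (by omega)
        obtain ⟨hPer2Y, hd1⟩ := happ lb (by rw [hZlen]; omega)
        obtain ⟨-, hd2⟩ := happ (lb + 1) (by rw [hZlen]; omega)
        have hdvd : (pp : ℤ) ∣ (nX : ℤ) - (nY : ℤ) := by
          have h6 := dvd_sub hd2 hd1
          have e : ((((List.replicate (lb+1) l).flatten ++ X.edges).length : ℕ) : ℤ) - (nY : ℤ)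
              - (((((List.replicate lb l).flatten ++ X.edges).length : ℕ) : ℤ) - (nY : ℤ))
              = (nX : ℤ) - (nY : ℤ) := by
            rw [hZlen, hZlen]
            have e2 : ((nX - nY : ℕ) : ℤ) = (nX : ℤ) - nY := by omega
            push_cast
            rw [e2]
            ring
          rw [e] at h6
          exact h6
        exact ⟨hXt, hYt, ht2min _ hPer2Y, hdvd⟩
      · rcases lt_or_ge nY lb with hcase2 | hcase2
        · obtain ⟨hXt, hYt, hPer2Y, hdvd⟩ :=
            machine_mixed hpp hPer1 hb hab2 (hconj := hconj) hcase2 hcase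
          exact ⟨hXt, hYt, ht2min _ hPer2Y, hdvd⟩
        · -- case A : lb ≤ nY < nX
          have hbX : b.IsSuffixOf X := by
            rcases GIS.mul_cases (R1.tailP α) b X Y hab2 hXY with h0 | hsf | hsf
            · exfalso
              rw [h0, GIS.zero_mul'] at hconj
              exact zero_not_mem_raySet hconj
            · have h7 : X = b := hsf.eq_of_length (by have := hsf.length_le; omega)
              rw [h7]
              exact DPath.suffix_refl b
            · exact hsf
          rw [GIS.mul_pair_suff2 hbX, GIS.inv_pair] at hconj
          have hbY : b.IsSuffixOf Y := by
            by_cases hc1 : b.IsSuffixOf Y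
            · exact hc1
            by_cases hc2 : Y.IsSuffixOf b
            · have h7 : Y = b := hc2.eq_of_length (by have := hc2.length_le; omega)
              exfalso
              apply hc1
              rw [h7]
              exact DPath.suffix_refl b
            · exfalso
              rw [GIS.mul_zero_of_not hc1 hc2] at hconj
              exact zero_not_mem_raySet hconj
          rw [GIS.mul_pair_suff hbY] at hconj
          obtain ⟨I, J, hσIJ, heq, hcond⟩ := hconj
          obtain ⟨hX1, hY1⟩ := GIS.pair_inj heq
          have h9 : X.edges.take (nX - lb) ++ (R1.tailP α).edges = R1.segEdges 0 I := by
            have := congrArg DPath.edges hX1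
            dsimp only at this
            exact this
          have h9' : Y.edges.take (nY - lb) ++ (R1.tailP α).edges = R1.segEdges 0 J := by
            have := congrArg DPath.edges hY1
            dsimp only at this
            exact this
          have hIlen : I = (nX - lb) + α := by
            have := congrArg List.length h9
            simp only [List.length_append, List.length_take, Ray.tailP_length,
              Ray.length_segEdges] at this
            omega
          have hJlen : J = (nY - lb) + α := by
            have := congrArg List.length h9'
            simp only [List.length_append, List.length_take, Ray.tailP_length,
              Ray.length_segEdges] at this
            omega
          have hcond' : t1 ≤ I ∧ t1 ≤ J ∧ (pp : ℤ) ∣ (I : ℤ) - (J : ℤ) := by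
            rcases hcond with he | hc
            · exfalso
              omega
            · exact hc
          have hdvd : (pp : ℤ) ∣ (nX : ℤ) - (nY : ℤ) := by
            obtain ⟨z, hz'⟩ := hcond'.2.2
            refine ⟨z, ?_⟩
            have e : (nX : ℤ) - (nY : ℤ) = (I : ℤ) - (J : ℤ) := by omega
            rw [e, hz']
          have hsplit2 := R1.segEdges_append 0 α (nX - lb)
          rw [Nat.zero_add, show α + (nX - lb) = (nX - lb) + α by omega] at hsplit2
          have hsplit2' := R1.segEdges_append 0 α (nY - lb)
          rw [Nat.zero_add, show α + (nY - lb) = (nY - lb) + α by omega] at hsplit2'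
          have hinj2 := List.append_inj
            (h9.trans (by rw [show I = (nX - lb) + α by omega, hsplit2]))
            (by simp only [List.length_take, Ray.length_segEdges]; omega)
          have hinj2' := List.append_inj
            (h9'.trans (by rw [show J = (nY - lb) + α by omega, hsplit2']))
            (by simp only [List.length_take, Ray.length_segEdges]; omega)
          have hXt : X = R2.tailP nX := xtail_of_take hb hbX hinj2.1 (by omega)
          have hYt : Y = R2.tailP nY := by
            rcases eq_or_lt_of_le hcase2 with he | hlt2
            · have h7 : Y = b := (hbY.eq_of_length (by omega)).symm
              rw [h7, ← he]
              exact (Ray.glue_tailP R1 α b hb).symm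
            · exact xtail_of_take hb hbY hinj2'.1 (by omega)
          have hPer2Y : R2.Per pp nY := by
            intro i hi
            have h1 : R2.om (i + pp) = R1.om (α + (i - lb) + pp) := by
              have h12 := Ray.glue_om_high R1 α b hb ((i - lb) + pp)
              rw [show lb + ((i - lb) + pp) = i + pp by omega,
                show α + ((i - lb) + pp) = α + (i - lb) + pp by omega] at h12
              exact h12
            have h2 : R2.om i = R1.om (α + (i - lb)) := by
              have h12 := Ray.glue_om_high R1 α b hb (i - lb)
              rw [show lb + (i - lb) = i by omega] at h12
              exact h12
            rw [h1, h2]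
            exact hPer1 _ (by omega)
          exact ⟨hXt, hYt, ht2min _ hPer2Y, hdvd⟩
    -- idempotents
    have hidem : ∀ (X : G.DPath) (hXX : X.first = X.first), GIS.pair X X hXX ∈ M →
        X = R2.tailP X.edges.length := by
      intro X hXX hm
      have hconj := hout _ hm
      set nX := X.edges.length with hnX
      rcases le_or_gt nX lb with hcase | hcase
      · have hXb : X.IsSuffixOf b := by
          rcases GIS.mul_cases (R1.tailP α) b X X hab2 hXX with h0 | hsf | hsf
          · exfalso
            rw [h0, GIS.zero_mul'] at hconj
            exact zero_not_mem_raySet hconj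
          · exact hsf
          · have h7 : b = X := hsf.eq_of_length (by have := hsf.length_le; omega)
            rw [← h7]
            exact DPath.suffix_refl b
        have h8 : X.IsSuffixOf (R2.tailP lb) := by
          rw [Ray.glue_tailP]
          exact hXb
        exact (Ray.suffix_tailP h8).1
      · have hbX : b.IsSuffixOf X := by
          rcases GIS.mul_cases (R1.tailP α) b X X hab2 hXX with h0 | hsf | hsf
          · exfalso
            rw [h0, GIS.zero_mul'] at hconj
            exact zero_not_mem_raySet hconj
          · exfalso
            have := hsf.length_le
            omega
          · exact hsf
        rw [GIS.mul_pair_suff2 hbX, GIS.inv_pair, GIS.mul_pair_suff hbX] at hconj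
        obtain ⟨I, J, hσIJ, heq, hcond⟩ := hconj
        obtain ⟨hX1, -⟩ := GIS.pair_inj heq
        have h9 : X.edges.take (nX - lb) ++ (R1.tailP α).edges = R1.segEdges 0 I := by
          have := congrArg DPath.edges hX1
          dsimp only at this
          exact this
        have hIlen : I = (nX - lb) + α := by
          have := congrArg List.length h9
          simp only [List.length_append, List.length_take, Ray.tailP_length,
            Ray.length_segEdges] at this
          omega
        have hsplit2 := R1.segEdges_append 0 α (nX - lb)
        rw [Nat.zero_add, show α + (nX - lb) = (nX - lb) + α by omega] at hsplit2
        have hinj2 := List.append_inj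
          (h9.trans (by rw [show I = (nX - lb) + α by omega, hsplit2]))
          (by simp only [List.length_take, Ray.length_segEdges]; omega)
        exact xtail_of_take hb hbX hinj2.1 (by omega)
    -- M ⊆ raySet R2
    have hsub : M ⊆ raySet G R2 pp t2 := by
      intro m hm
      cases m with
      | zero => exact absurd hm hM0
      | pair X Y hXY =>
        rcases Nat.lt_trichotomy X.edges.length Y.edges.length with hlt | heq | hlt
        · have hm' : GIS.pair Y X hXY.symm ∈ M := by
            have h1 := hM.2.2.1 _ hm
            rw [GIS.inv_pair] at h1
            exact h1
          obtain ⟨hYt, hXt, hle2, hdvd⟩ := hmainlt Y X hXY.symm hm' hlt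
          refine ⟨X.edges.length, Y.edges.length, by rw [← hXt, ← hYt]; exact hXY,
            GIS.pair_congr hXt hYt, Or.inr ⟨hle2, by omega, ?_⟩⟩
          rw [show (X.edges.length : ℤ) - (Y.edges.length : ℤ)
            = -((Y.edges.length : ℤ) - (X.edges.length : ℤ)) by ring]
          exact dvd_neg.mpr hdvd
        · have hXeqY : X = Y := by
            by_contra hne
            have hmm := hM.2.1 _ hm _ hm
            rcases GIS.mul_cases X Y X Y hXY hXY with h0 | hsf | hsf
            · rw [h0] at hmm
              exact hM0 hmm
            · exact hne (hsf.eq_of_length (by omega))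
            · exact hne (hsf.eq_of_length (by omega)).symm
          subst hXeqY
          have hXt := hidem X hXY hm
          exact ⟨X.edges.length, X.edges.length, by rw [← hXt],
            GIS.pair_congr hXt hXt, Or.inl rfl⟩
        · obtain ⟨hXt, hYt, hle2, hdvd⟩ := hmainlt X Y hXY hm hlt
          exact ⟨X.edges.length, Y.edges.length, by rw [← hXt, ← hYt]; exact hXY,
            GIS.pair_congr hXt hYt, Or.inr ⟨by omega, hle2, hdvd⟩⟩
    -- raySet R2 ⊆ M
    have hsup : raySet G R2 pp t2 ⊆ M := by
      rintro x ⟨i, j, hσ, rfl, hc⟩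
      set K := (lb + t1 + 1) * pp with hKdef
      have hKge : lb + t1 + 1 ≤ K := by
        have h1 : (lb + t1 + 1) * 1 ≤ (lb + t1 + 1) * pp := Nat.mul_le_mul_left _ hpp
        have h2 : (lb + t1 + 1) * 1 = lb + t1 + 1 := Nat.mul_one _
        omega
      set i' := i + K - lb + α with hi'
      set j' := j + K - lb + α with hj'
      have hσ1 : (R1.tailP i').first = (R1.tailP j').first := by
        rcases hc with rfl | ⟨h1, h2, h3⟩
        · rfl
        · rw [Ray.tailP_first, Ray.tailP_first]
          refine hPer1.sig_congr hpp (by omega) (by omega) ?_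
          obtain ⟨z, hz⟩ := h3
          exact ⟨z, by rw [show (i' : ℤ) - (j' : ℤ) = (i : ℤ) - (j : ℤ) by omega, hz]⟩
      have hsrc : GIS.pair (R1.tailP i') (R1.tailP j') hσ1 ∈ raySet G R1 pp t1 := by
        refine ⟨i', j', hσ1, rfl, ?_⟩
        rcases hc with rfl | ⟨h1, h2, h3⟩
        · exact Or.inl rfl
        · refine Or.inr ⟨by omega, by omega, ?_⟩
          obtain ⟨z, hz⟩ := h3
          exact ⟨z, by rw [show (i' : ℤ) - (j' : ℤ) = (i : ℤ) - (j : ℤ) by omega, hz]⟩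
      have hμ := hin _ hsrc
      rw [mu_formula hb (by omega) (by omega) hσ1 hab2] at hμ
      have e1 : (R1.glue α b hb).tailP (i' - α + b.edges.length) = R2.tailP (i + K) :=
        congrArg _ (by omega)
      have e2 : (R1.glue α b hb).tailP (j' - α + b.edges.length) = R2.tailP (j + K) :=
        congrArg _ (by omega)
      rw [GIS.pair_congr e1 e2 (h' := by rw [← e1, ← e2]; exact
        (glue_tail_first hb (by omega)).trans (hσ1.trans (glue_tail_first hb (by omega)).symm))] at hμ
      refine hM.2.2.2 _ hμ _ ?_
      refine GIS.le_intro (R2.tailP_suffix (by omega : i ≤ i + K)) ?_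
      simp only [Ray.tailP_edges, Ray.length_segEdges]
      rw [show i + K - i = K by omega]
      have h3 := Ray.seg_take (R := R2) 0 (i + K) K (by omega)
      rw [show 0 + (i + K - K) = i by omega] at h3
      rw [h3]
      have h4 := R2.segEdges_append 0 j K
      rw [Nat.zero_add] at h4
      rw [h4]
      congr 1
      exact segEdges_congr' hPer2 hpp (RRel.symm' hc) K
    refine ⟨R2, t2, hPer2, hmin, Set.Subset.antisymm hsub hsup,
      machine_rot hpp hPer1 hb hPer2⟩

end DGraph


namespace DGraph

variable {G : DGraph}

/-- The ray winding around a circuit forever. -/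
def pureRay (p : G.DPath) (hne : p.edges ≠ []) (hcirc : p.last = p.first) : G.Ray where
  om i := rlet p.edges (i % p.edges.length) (Nat.mod_lt _ (List.length_pos_iff.mpr hne))
  v0 := p.first
  coh0 := by
    rw [rlet_congr (show 0 % p.edges.length = 0 from Nat.zero_mod _)]
    rw [tgt_rlet_zero (List.length_pos_iff.mpr hne)]
    exact hcirc
  coh := by
    intro i
    have hnpos : 0 < p.edges.length := List.length_pos_iff.mpr hne
    have hsucc : (i + 1) % p.edges.length = (i % p.edges.length + 1) % p.edges.length :=
      (Nat.mod_add_mod i p.edges.length 1).symm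
    rcases Nat.lt_or_ge (i % p.edges.length + 1) p.edges.length with hlt | hge
    · rw [rlet_congr (show (i+1) % p.edges.length = i % p.edges.length + 1 from by
        rw [hsucc]; exact Nat.mod_eq_of_lt hlt)]
      exact tgt_rlet_succ p.wf (by omega)
    · have he : i % p.edges.length + 1 = p.edges.length := by
        have := Nat.mod_lt i hnpos
        omega
      rw [rlet_congr (show (i+1) % p.edges.length = 0 from by
        rw [hsucc, he, Nat.mod_self])]
      rw [rlet_congr (show i % p.edges.length = p.edges.length - 1 from by omega)]
      rw [tgt_rlet_zero hnpos, hcirc]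
      exact (src_rlet_last p.wf hnpos).symm

theorem pureRay_per (p : G.DPath) (hne : p.edges ≠ []) (hcirc : p.last = p.first) :
    (pureRay p hne hcirc).Per p.edges.length 0 := by
  intro i _
  have h1 : (pureRay p hne hcirc).om (i + p.edges.length)
      = rlet p.edges ((i + p.edges.length) % p.edges.length)
        (Nat.mod_lt _ (List.length_pos_iff.mpr hne)) := rfl
  have h2 : (pureRay p hne hcirc).om i
      = rlet p.edges (i % p.edges.length) (Nat.mod_lt _ (List.length_pos_iff.mpr hne)) := rfl
  rw [h1, h2]
  exact rlet_congr (Nat.add_mod_right i _)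

theorem pureRay_tailP (p : G.DPath) (hne : p.edges ≠ []) (hcirc : p.last = p.first) :
    (pureRay p hne hcirc).tailP p.edges.length = p := by
  have hnpos : 0 < p.edges.length := List.length_pos_iff.mpr hne
  have he : (pureRay p hne hcirc).segEdges 0 p.edges.length = p.edges := by
    have h1 := Ray.segEdges_eq_drop (R := pureRay p hne hcirc) (l := p.edges)
      (le_refl p.edges.length)
      (fun i hi => by
        have h1 : (pureRay p hne hcirc).om i
            = rlet p.edges (i % p.edges.length) (Nat.mod_lt _ (List.length_pos_iff.mpr hne)) := rfl
        rw [h1]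
        exact rlet_congr (Nat.mod_eq_of_lt hi))
    simpa using h1
  exact DPath.ext_ne (by rw [Ray.tailP_edges]; exact he)
    (by rw [Ray.tailP_edges, he]; exact hne)

theorem exists_rayOf (p d : G.DPath) (hne : p.edges ≠ []) (hcirc : p.last = p.first)
    (hd : d.first = p.first) :
    ∃ R : G.Ray, R.Per p.edges.length d.edges.length ∧
      R.tailP d.edges.length = d ∧ R.seg d.edges.length p.edges.length = p := by
  have hb : d.first = (pureRay p hne hcirc).sig 0 := by rw [hd]; rfl
  refine ⟨(pureRay p hne hcirc).glue 0 d hb, ?_, Ray.glue_tailP _ _ _ _, ?_⟩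
  · intro i hi
    have e1 := Ray.glue_om_high (pureRay p hne hcirc) 0 d hb
      ((i - d.edges.length) + p.edges.length)
    rw [show d.edges.length + ((i - d.edges.length) + p.edges.length)
      = i + p.edges.length by omega, Nat.zero_add] at e1
    have e2 := Ray.glue_om_high (pureRay p hne hcirc) 0 d hb (i - d.edges.length)
    rw [show d.edges.length + (i - d.edges.length) = i by omega, Nat.zero_add] at e2
    rw [e1, e2]
    exact pureRay_per p hne hcirc (i - d.edges.length) (Nat.zero_le _)
  · have h1 := Ray.glue_seg_high (pureRay p hne hcirc) 0 d hb 0 p.edges.length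
    rw [Nat.add_zero, Nat.add_zero] at h1
    rw [h1]
    exact pureRay_tailP p hne hcirc

theorem segEdges_cons (R : G.Ray) (lo : ℕ) {n : ℕ} (hn : 0 < n) :
    R.segEdges lo n = R.om (lo + n - 1) :: R.segEdges lo (n - 1) := by
  obtain ⟨m, rfl⟩ : ∃ m, n = m + 1 := ⟨n - 1, by omega⟩
  show R.om (lo + m) :: _ = _ :: _
  rw [show lo + (m + 1) - 1 = lo + m by omega, show m + 1 - 1 = m by omega]

theorem min_of_ncp {R : G.Ray} {pp t : ℕ} (hpp : 0 < pp)
    (hncp : G.NoCommonPrefix (R.seg t pp) (R.tailP t)) :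
    t = 0 ∨ R.om (t - 1 + pp) ≠ R.om (t - 1) := by
  rcases Nat.eq_zero_or_pos t with h0 | h0
  · exact Or.inl h0
  refine Or.inr fun hcon => ?_
  have hpre1 : [R.om (t - 1)] <+: (R.seg t pp).edges := by
    rw [Ray.seg_edges, segEdges_cons R t hpp, show t + pp - 1 = t - 1 + pp by omega, hcon]
    exact ⟨_, rfl⟩
  have hpre2 : [R.om (t - 1)] <+: (R.tailP t).edges := by
    rw [Ray.tailP_edges, segEdges_cons R 0 h0, show 0 + t - 1 = t - 1 by omega]
    exact ⟨_, rfl⟩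
  exact hncp _ (by simp) hpre1 hpre2

theorem ncp_of_min {R : G.Ray} {pp t : ℕ} (hpp : 0 < pp)
    (hmin : t = 0 ∨ R.om (t - 1 + pp) ≠ R.om (t - 1)) :
    G.NoCommonPrefix (R.seg t pp) (R.tailP t) := by
  intro l hl hlp hld
  rcases hmin with h0 | hne
  · subst h0
    obtain ⟨tl, htl⟩ := hld
    have h2 : (R.tailP 0).edges = [] := rfl
    rw [h2] at htl
    rcases l with _ | ⟨e, l'⟩
    · exact hl rfl
    · simp at htl
  · obtain ⟨e, l', rfl⟩ : ∃ e l', l = e :: l' := by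
      rcases l with _ | ⟨e, l'⟩
      · exact absurd rfl hl
      · exact ⟨_, _, rfl⟩
    apply hne
    obtain ⟨t1l, ht1⟩ := hlp
    obtain ⟨t2l, ht2⟩ := hld
    have ht0 : 0 < t := by
      have := congrArg List.length ht2
      simp only [Ray.tailP_edges, List.length_append, List.length_cons,
        Ray.length_segEdges] at this
      omega
    have he1 : e = R.om (t + pp - 1) := by
      rw [Ray.seg_edges, segEdges_cons R t hpp] at ht1
      simp only [List.cons_append, List.cons.injEq] at ht1
      exact ht1.1
    have he2 : e = R.om (t - 1) := by
      rw [Ray.tailP_edges, segEdges_cons R 0 ht0,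
        show 0 + t - 1 = t - 1 by omega] at ht2
      simp only [List.cons_append, List.cons.injEq] at ht2
      exact ht2.1
    rw [show t - 1 + pp = t + pp - 1 by omega, ← he1, ← he2]

theorem seg_eq_of_tails {R R' : G.Ray} (h : ∀ n, R.tailP n = R'.tailP n) (lo n : ℕ) :
    R.seg lo n = R'.seg lo n := by
  have hom : ∀ i, R.om i = R'.om i := by
    intro i
    have h1 := congrArg DPath.edges (h (i + 1))
    simp only [Ray.tailP_edges] at h1
    have h2 := Ray.om_eq_of_segEdges h1 i (by omega)
    simpa using h2
  have hsig : ∀ j, R.sig j = R'.sig j := by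
    intro j
    cases j with
    | zero =>
      have := congrArg DPath.first (h 0)
      simpa using this
    | succ m =>
      show G.src (R.om m) = G.src (R'.om m)
      rw [hom]
  exact DPath.ext' (hsig _) (Ray.segEdges_eq_of_om (fun x _ => hom _))

theorem raySet_eq_unique {R R' : G.Ray} {pp pp' t t' : ℕ} (hpp : 0 < pp) (hpp' : 0 < pp')
    (hPer : R.Per pp t) (hPer' : R'.Per pp' t')
    (heq : raySet G R pp t = raySet G R' pp' t') :
    pp = pp' ∧ t = t' ∧ ∀ n, R.tailP n = R'.tailP n := by
  have htails : ∀ n, R.tailP n = R'.tailP n := by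
    intro n
    have h1 : GIS.pair (R.tailP n) (R.tailP n) rfl ∈ raySet G R' pp' t' := by
      rw [← heq]
      exact mem_raySet_idem R pp t n
    obtain ⟨i, j, hσ, hx, -⟩ := h1
    obtain ⟨h2, -⟩ := GIS.pair_inj hx
    have h3 : i = n := by
      have := congrArg (fun z : G.DPath => z.edges.length) h2
      simpa using this.symm
    rw [h2, h3]
  have hkey : ∀ (S S' : G.Ray) (q q' s s' : ℕ), 0 < q → S.Per q s →
      raySet G S q s ⊆ raySet G S' q' s' → (∀ n, S.tailP n = S'.tailP n) →
      s' ≤ s ∧ q' ∣ q := by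
    intro S S' q q' s s' hq hP hsub ht
    have hσt : (S.tailP (s + q)).first = (S.tailP s).first := by
      rw [Ray.tailP_first, Ray.tailP_first]
      exact hP.sig_congr hq (by omega) (by omega) ⟨1, by push_cast; ring⟩
    have hmem : GIS.pair (S.tailP (s + q)) (S.tailP s) hσt ∈ raySet G S q s :=
      ⟨s + q, s, hσt, rfl, Or.inr ⟨by omega, le_refl s, ⟨1, by push_cast; ring⟩⟩⟩
    obtain ⟨i, j, hσ', hx, hcond⟩ := hsub hmem
    obtain ⟨h2, h3⟩ := GIS.pair_inj hx
    have hi : i = s + q := by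
      have := congrArg (fun z : G.DPath => z.edges.length) h2
      simpa using this.symm
    have hj : j = s := by
      have := congrArg (fun z : G.DPath => z.edges.length) h3
      simpa using this.symm
    rcases hcond with he | ⟨hc1, hc2, hc3⟩
    · omega
    · refine ⟨by omega, ?_⟩
      have h4 : (q' : ℤ) ∣ (q : ℤ) := by
        have e : (i : ℤ) - (j : ℤ) = (q : ℤ) := by omega
        rw [e] at hc3
        exact hc3
      exact_mod_cast h4
  have h5 := hkey R R' pp pp' t t' hpp hPer (by rw [heq]) htails
  have h6 := hkey R' R pp' pp t' t hpp' hPer' (by rw [heq]) (fun n => (htails n).symm)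
  exact ⟨Nat.dvd_antisymm h6.2 h5.2, by omega, htails⟩

end DGraph


namespace DGraph

variable {G : DGraph}

theorem mu_mem {R1 : G.Ray} {pp t1 : ℕ} (hpp : 0 < pp) (hPer1 : R1.Per pp t1)
    {b : G.DPath} (hb : b.first = R1.sig t1) {τ : ℕ} (hτ : τ ≤ b.edges.length)
    (hs : (R1.tailP t1).first = b.first)
    {m : GIS G} (hm : m ∈ raySet G R1 pp t1) :
    (GIS.pair (R1.tailP t1) b hs : GIS G).inv * m * GIS.pair (R1.tailP t1) b hs
      ∈ raySet G (R1.glue t1 b hb) pp τ := by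
  obtain ⟨i, j, hσ, rfl, hc⟩ := hm
  rcases hc with rfl | ⟨h1, h2, h3⟩
  · rcases le_or_gt t1 i with hti | hti
    · rw [mu_formula hb hti hti hσ hs]
      exact ⟨_, _, _, rfl, Or.inl rfl⟩
    · rw [GIS.inv_pair]
      obtain ⟨pf1, he1⟩ := mul_tail_left (R := R1) (X := b) (Y := R1.tailP i)
        (le_of_lt hti) hs.symm hσ
      rw [he1]
      have hY : (⟨b.first, R1.segEdges i (t1 - i) ++ (R1.tailP i).edges, pf1⟩ : G.DPath)
          = R1.tailP t1 := by
        refine DPath.ext' (by rw [hb, Ray.tailP_first]) ?_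
        show R1.segEdges i (t1 - i) ++ R1.segEdges 0 i = R1.segEdges 0 t1
        have e := R1.segEdges_append 0 i (t1 - i)
        rw [Nat.zero_add, show i + (t1 - i) = t1 by omega] at e
        rw [← e]
      rw [GIS.pair_congr (h' := hs.symm) rfl hY]
      obtain ⟨pf2, he2⟩ := mul_tail_left (R := R1) (X := b) (Y := b)
        (le_refl t1) hs.symm hs
      rw [he2]
      have hbb : (⟨b.first, R1.segEdges t1 (t1 - t1) ++ b.edges, pf2⟩ : G.DPath) = b := by
        refine DPath.ext' rfl ?_
        show R1.segEdges t1 (t1 - t1) ++ b.edges = b.edges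
        rw [Nat.sub_self]
        rfl
      rw [GIS.pair_congr (h' := rfl) rfl hbb]
      have hbt : b = (R1.glue t1 b hb).tailP b.edges.length := (Ray.glue_tailP _ _ _ _).symm
      exact ⟨b.edges.length, b.edges.length, by rw [← hbt], GIS.pair_congr hbt hbt,
        Or.inl rfl⟩
  · rw [mu_formula hb h1 h2 hσ hs]
    refine ⟨i - t1 + b.edges.length, j - t1 + b.edges.length, _, rfl,
      Or.inr ⟨by omega, by omega, ?_⟩⟩
    obtain ⟨z, hz⟩ := h3
    exact ⟨z, by rw [show ((i - t1 + b.edges.length : ℕ) : ℤ)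
      - ((j - t1 + b.edges.length : ℕ) : ℤ) = (i : ℤ) - (j : ℤ) by omega, hz]⟩

theorem nu_mem {R1 : G.Ray} {pp t1 : ℕ} (hpp : 0 < pp) (hPer1 : R1.Per pp t1)
    {b : G.DPath} (hb : b.first = R1.sig t1) {τ : ℕ} (hτ : τ ≤ b.edges.length)
    (hPer2 : (R1.glue t1 b hb).Per pp τ)
    (hs : (R1.tailP t1).first = b.first)
    {m : GIS G} (hm : m ∈ raySet G (R1.glue t1 b hb) pp τ) :
    GIS.pair (R1.tailP t1) b hs * m * (GIS.pair (R1.tailP t1) b hs).inv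
      ∈ raySet G R1 pp t1 := by
  set R2 := R1.glue t1 b hb with hR2
  set lb := b.edges.length with hlb
  obtain ⟨i, j, hσ, rfl, hc⟩ := hm
  have hbt : b = R2.tailP lb := (Ray.glue_tailP _ _ _ _).symm
  have hsl : (R1.tailP t1).first = (R2.tailP lb).first :=
    hs.trans (congrArg DPath.first hbt)
  have hglueseg0 : ∀ n, R2.segEdges lb n = R1.segEdges t1 n := by
    intro n
    have h1 := congrArg DPath.edges (Ray.glue_seg_high R1 t1 b hb 0 n)
    rw [Nat.add_zero, Nat.add_zero] at h1
    exact h1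
  have hgluesig : ∀ y, R2.sig (lb + y) = R1.sig (t1 + y) := Ray.glue_sig_high R1 t1 b hb
  have hsig0 : R2.sig lb = R1.sig t1 := by
    have := hgluesig 0
    rw [Nat.add_zero, Nat.add_zero] at this
    exact this
  have hup : ∀ {w : ℕ}, lb ≤ w → ∀ {F : G.V}, F = R1.sig (t1 + (w - lb)) →
      ∀ (pfw : G.IsWalk F (R2.segEdges lb (w - lb) ++ (R1.tailP t1).edges)),
      (⟨F, R2.segEdges lb (w - lb) ++ (R1.tailP t1).edges, pfw⟩ : G.DPath)
        = R1.tailP (w - lb + t1) := by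
    intro w hw F hF pfw
    refine DPath.ext' ?_ ?_
    · show F = (R1.tailP (w - lb + t1)).first
      rw [hF, Ray.tailP_first, show w - lb + t1 = t1 + (w - lb) by omega]
    · show R2.segEdges lb (w - lb) ++ R1.segEdges 0 t1 = R1.segEdges 0 (w - lb + t1)
      have e := R1.segEdges_append 0 t1 (w - lb)
      rw [Nat.zero_add, show t1 + (w - lb) = w - lb + t1 by omega] at e
      rw [hglueseg0 (w - lb), e]
  rw [(GIS.pair_congr rfl hbt :
    GIS.pair (R1.tailP t1) b hs = GIS.pair (R1.tailP t1) (R2.tailP lb) hsl)]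
  rcases le_or_gt lb i with hli | hli
  · -- lb ≤ i
    obtain ⟨pf1, he1⟩ := mul_tail_right (R := R2) (X := R1.tailP t1) (Y := R2.tailP j)
      hli hsl hσ
    rw [he1]
    have hX1 : (⟨(R2.tailP i).first, R2.segEdges lb (i - lb) ++ (R1.tailP t1).edges, pf1⟩
        : G.DPath) = R1.tailP (i - lb + t1) := by
      refine hup hli ?_ pf1
      rw [Ray.tailP_first]
      have e := hgluesig (i - lb)
      rw [show lb + (i - lb) = i by omega] at e
      exact e
    rw [GIS.pair_congr (h' := (congrArg DPath.first hX1).symm.trans hσ) hX1 rfl, GIS.inv_pair]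
    rcases le_or_gt lb j with hlj | hlj
    · -- lb ≤ j
      obtain ⟨pf2, he2⟩ := mul_tail_left (R := R2) (X := R1.tailP (i - lb + t1))
        (Y := R1.tailP t1) hlj
        (by rw [← hX1]; exact hσ) hsl.symm
      rw [he2]
      have hY2 : (⟨(R1.tailP (i - lb + t1)).first,
          R2.segEdges lb (j - lb) ++ (R1.tailP t1).edges, pf2⟩ : G.DPath)
          = R1.tailP (j - lb + t1) := by
        refine hup hlj ?_ pf2
        rw [← hX1]
        show (R2.tailP i).first = _
        rw [hσ, Ray.tailP_first]
        have e := hgluesig (j - lb)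
        rw [show lb + (j - lb) = j by omega] at e
        exact e
      have hfirst : (R1.tailP (i - lb + t1)).first = (R1.tailP (j - lb + t1)).first := by
        have ha1 := congrArg DPath.first hX1
        have ha2 : (R2.tailP j).first = (R1.tailP (j - lb + t1)).first := by
          rw [Ray.tailP_first, Ray.tailP_first, show j - lb + t1 = t1 + (j - lb) by omega,
            ← hgluesig (j - lb), show lb + (j - lb) = j by omega]
        rw [← ha2]
        exact ha1.symm.trans hσ
      rw [GIS.pair_congr (h' := hfirst) rfl hY2]
      refine ⟨i - lb + t1, j - lb + t1, hfirst, rfl, ?_⟩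
      rcases hc with rfl | ⟨hc1, hc2, hc3⟩
      · exact Or.inl rfl
      · refine Or.inr ⟨by omega, by omega, ?_⟩
        obtain ⟨z, hz⟩ := hc3
        exact ⟨z, by rw [show ((i - lb + t1 : ℕ) : ℤ) - ((j - lb + t1 : ℕ) : ℤ)
          = (i : ℤ) - (j : ℤ) by omega, hz]⟩
    · -- lb ≤ i, j < lb : i ≠ j
      have hij : i ≠ j := by omega
      have hcc : τ ≤ i ∧ τ ≤ j ∧ (pp : ℤ) ∣ (i : ℤ) - (j : ℤ) := by
        rcases hc with rfl | hcc
        · omega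
        · exact hcc
      obtain ⟨pf2, he2⟩ := mul_tail_right (R := R2) (X := R1.tailP (i - lb + t1))
        (Y := R1.tailP t1) (le_of_lt hlj)
        (by rw [← hX1]; exact hσ) hsl.symm
      rw [he2]
      have hY2 : (⟨(R2.tailP lb).first,
          R2.segEdges j (lb - j) ++ (R1.tailP (i - lb + t1)).edges, pf2⟩ : G.DPath)
          = R1.tailP (i - j + t1) := by
        refine DPath.ext' ?_ ?_
        · show (R2.tailP lb).first = (R1.tailP (i - j + t1)).first
          rw [Ray.tailP_first, Ray.tailP_first, hsig0]
          refine hPer1.sig_congr hpp (by omega) (by omega) ?_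
          obtain ⟨z, hz⟩ := hcc.2.2
          exact ⟨-z, by rw [show (t1 : ℤ) - ((i - j + t1 : ℕ) : ℤ)
            = -((i : ℤ) - (j : ℤ)) by omega, hz]; ring⟩
        · show R2.segEdges j (lb - j) ++ R1.segEdges 0 (i - lb + t1)
            = R1.segEdges 0 (i - j + t1)
          have e1 : R2.segEdges j (lb - j) = R2.segEdges i (lb - j) :=
            segEdges_congr' hPer2 hpp (Or.inr ⟨hcc.2.1, hcc.1, by
              rw [show (j : ℤ) - (i : ℤ) = -((i : ℤ) - (j : ℤ)) by ring]
              exact dvd_neg.mpr hcc.2.2⟩) (lb - j)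
          have e2 : R2.segEdges i (lb - j) = R1.segEdges (t1 + (i - lb)) (lb - j) := by
            have e3 := congrArg DPath.edges (Ray.glue_seg_high R1 t1 b hb (i - lb) (lb - j))
            rw [show lb + (i - lb) = i by omega] at e3
            exact e3
          have e4 := R1.segEdges_append 0 (i - lb + t1) (lb - j)
          rw [Nat.zero_add, show i - lb + t1 + (lb - j) = i - j + t1 by omega] at e4
          rw [e1, e2, e4, show i - lb + t1 = t1 + (i - lb) by omega]
      have hfirst2 : (R1.tailP (i - j + t1)).first = (R1.tailP t1).first := by
        rw [← hY2]
        show (R2.tailP lb).first = (R1.tailP t1).first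
        rw [Ray.tailP_first, Ray.tailP_first, hsig0]
      rw [GIS.pair_congr (h' := hfirst2) hY2 rfl]
      refine ⟨i - j + t1, t1, hfirst2, rfl, Or.inr ⟨by omega, le_refl t1, ?_⟩⟩
      obtain ⟨z, hz⟩ := hcc.2.2
      exact ⟨z, by rw [show ((i - j + t1 : ℕ) : ℤ) - (t1 : ℤ) = (i : ℤ) - (j : ℤ) by omega,
        hz]⟩
  · -- i < lb
    obtain ⟨pf1, he1⟩ := mul_tail_left (R := R2) (X := R1.tailP t1) (Y := R2.tailP j)
      (le_of_lt hli) hsl hσ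
    rw [he1]
    have hY1 : (⟨(R1.tailP t1).first, R2.segEdges i (lb - i) ++ (R2.tailP j).edges, pf1⟩
        : G.DPath) = R2.tailP (j + (lb - i)) := by
      refine DPath.ext' ?_ ?_
      · show (R1.tailP t1).first = (R2.tailP (j + (lb - i))).first
        rw [Ray.tailP_first, Ray.tailP_first, ← hsig0]
        refine (sig_congr' hPer2 hpp ?_).symm
        have := RRel.shift (RRel.symm' hc) (lb - i)
        rw [show i + (lb - i) = lb by omega] at this
        exact this
      · show R2.segEdges i (lb - i) ++ R2.segEdges 0 j = R2.segEdges 0 (j + (lb - i))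
        have e1 : R2.segEdges i (lb - i) = R2.segEdges j (lb - i) :=
          segEdges_congr' hPer2 hpp hc (lb - i)
        have e2 := R2.segEdges_append 0 j (lb - i)
        rw [Nat.zero_add] at e2
        rw [e1, e2]
    have hfY1 : (R1.tailP t1).first = (R2.tailP (j + (lb - i))).first := by
      have h := congrArg DPath.first hY1
      exact h
    rw [GIS.pair_congr (h' := hfY1) rfl hY1, GIS.inv_pair]
    set ν := j + (lb - i) with hν
    rcases le_or_gt lb ν with hlν | hlν
    · have hrel : RRel pp t1 t1 (t1 + (ν - lb)) := by
        rcases hc with rfl | ⟨hc1, hc2, hc3⟩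
        · rw [show ν - lb = 0 by omega]
          exact Or.inl (by omega)
        · refine Or.inr ⟨le_refl t1, by omega, ?_⟩
          obtain ⟨z, hz⟩ := hc3
          exact ⟨z, by rw [show (t1 : ℤ) - ((t1 + (ν - lb) : ℕ) : ℤ)
            = (i : ℤ) - (j : ℤ) by omega, hz]⟩
      obtain ⟨pf2, he2⟩ := mul_tail_left (R := R2) (X := R1.tailP t1)
        (Y := R1.tailP t1) hlν hfY1 hsl.symm
      rw [he2]
      have hY2 : (⟨(R1.tailP t1).first,
          R2.segEdges lb (ν - lb) ++ (R1.tailP t1).edges, pf2⟩ : G.DPath)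
          = R1.tailP (ν - lb + t1) := by
        refine hup hlν ?_ pf2
        rw [Ray.tailP_first]
        exact sig_congr' hPer1 hpp hrel
      have hfirst3 : (R1.tailP t1).first = (R1.tailP (ν - lb + t1)).first := by
        rw [Ray.tailP_first, Ray.tailP_first, show ν - lb + t1 = t1 + (ν - lb) by omega]
        exact sig_congr' hPer1 hpp hrel
      rw [GIS.pair_congr (h' := hfirst3) rfl hY2]
      refine ⟨t1, ν - lb + t1, hfirst3, rfl, ?_⟩
      rcases hc with rfl | ⟨hc1, hc2, hc3⟩
      · exact Or.inl (by omega)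
      · refine Or.inr ⟨le_refl t1, by omega, ?_⟩
        obtain ⟨z, hz⟩ := hc3
        exact ⟨z, by rw [show (t1 : ℤ) - ((ν - lb + t1 : ℕ) : ℤ)
          = (i : ℤ) - (j : ℤ) by omega, hz]⟩
    · -- ν < lb, hence j < i
      have hij : i ≠ j := by omega
      have hcc : τ ≤ i ∧ τ ≤ j ∧ (pp : ℤ) ∣ (i : ℤ) - (j : ℤ) := by
        rcases hc with rfl | hcc
        · omega
        · exact hcc
      obtain ⟨pf2, he2⟩ := mul_tail_right (R := R2) (X := R1.tailP t1)
        (Y := R1.tailP t1) (le_of_lt hlν) hfY1 hsl.symm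
      rw [he2]
      have hY2 : (⟨(R2.tailP lb).first,
          R2.segEdges ν (lb - ν) ++ (R1.tailP t1).edges, pf2⟩ : G.DPath)
          = R1.tailP ((lb - ν) + t1) := by
        refine DPath.ext' ?_ ?_
        · show (R2.tailP lb).first = (R1.tailP ((lb - ν) + t1)).first
          rw [Ray.tailP_first, Ray.tailP_first, hsig0]
          refine hPer1.sig_congr hpp (by omega) (by omega) ?_
          obtain ⟨z, hz⟩ := hcc.2.2
          exact ⟨-z, by rw [show (t1 : ℤ) - (((lb - ν) + t1 : ℕ) : ℤ)
            = -((i : ℤ) - (j : ℤ)) by omega, hz]; ring⟩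
        · show R2.segEdges ν (lb - ν) ++ R1.segEdges 0 t1
            = R1.segEdges 0 ((lb - ν) + t1)
          have e1 : R2.segEdges ν (lb - ν) = R2.segEdges lb (lb - ν) :=
            segEdges_congr' hPer2 hpp (Or.inr ⟨by omega, by omega, by
              rw [show (ν : ℤ) - (lb : ℤ) = -((i : ℤ) - (j : ℤ)) by omega]
              exact dvd_neg.mpr hcc.2.2⟩) (lb - ν)
          have e4 := R1.segEdges_append 0 t1 (lb - ν)
          rw [Nat.zero_add, show t1 + (lb - ν) = (lb - ν) + t1 by omega] at e4
          rw [e1, hglueseg0, e4]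
      have hfirst4 : (R1.tailP ((lb - ν) + t1)).first = (R1.tailP t1).first := by
        rw [← hY2]
        show (R2.tailP lb).first = (R1.tailP t1).first
        rw [Ray.tailP_first, Ray.tailP_first, hsig0]
      rw [GIS.pair_congr (h' := hfirst4) hY2 rfl]
      refine ⟨(lb - ν) + t1, t1, hfirst4, rfl, Or.inr ⟨by omega, le_refl t1, ?_⟩⟩
      obtain ⟨z, hz⟩ := hcc.2.2
      exact ⟨z, by rw [show (((lb - ν) + t1 : ℕ) : ℤ) - (t1 : ℤ)
        = (i : ℤ) - (j : ℤ) by omega, hz]⟩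

end DGraph


open DGraph

/-- any closed inverse subsemigroup conjugate to one of cycle type is
of cycle type, and `L_{p,d}` and `L_{q,k}` are conjugate iff `p` and `q` are
conjugate paths (`p = uv` and `q = vu`). -/
theorem stmt_13 (G : DGraph) [Fintype G.V] [Fintype G.E] :
    (∀ p d : G.DPath, G.IsCircuit p → d.first = p.first → G.NoCommonPrefix p d →
      ∀ M : Set (GIS G), IsCISS G M → Conjugate G (cycleSet G p d) M →
        ∃ q k : G.DPath, G.IsCircuit q ∧ k.first = q.first ∧ G.NoCommonPrefix q k ∧
          M = cycleSet G q k) ∧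
    (∀ p d q k : G.DPath, G.IsCircuit p → d.first = p.first → G.NoCommonPrefix p d →
      G.IsCircuit q → k.first = q.first → G.NoCommonPrefix q k →
      (Conjugate G (cycleSet G p d) (cycleSet G q k) ↔
        ∃ (u v : G.DPath) (h1 : v.first = u.last) (h2 : u.first = v.last),
          p = G.concatPath u v h1 ∧ q = G.concatPath v u h2)) := by
  constructor
  · intro p d hpc hdf hncp M hM hconj
    obtain ⟨hne, hcirc⟩ := hpc
    have hpp : 0 < p.edges.length := List.length_pos_iff.mpr hne
    obtain ⟨R1, hPer1, htail, hseg⟩ := exists_rayOf p d hne hcirc hdf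
    have hchar : cycleSet G p d = raySet G R1 p.edges.length d.edges.length :=
      cycleSet_eq_raySet hpp hPer1 hseg htail
    obtain ⟨s, hin, hout⟩ := hconj
    rw [hchar] at hin hout
    obtain ⟨R2, t2, hPer2, hmin, hMeq, u, v, h1, h2, hr1, hr2⟩ :=
      machine hpp hPer1 hM hin hout
    refine ⟨R2.seg t2 p.edges.length, R2.tailP t2, ⟨?_, ?_⟩, ?_, ?_, ?_⟩
    · exact List.ne_nil_of_length_pos (by simpa using hpp)
    · show (R2.seg t2 p.edges.length).last = (R2.seg t2 p.edges.length).first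
      rw [Ray.seg_last, Ray.seg_first]
      exact hPer2.sig_congr hpp (le_refl _) (by omega) ⟨-1, by push_cast; ring⟩
    · show (R2.tailP t2).first = (R2.seg t2 p.edges.length).first
      rw [Ray.tailP_first, Ray.seg_first]
      exact hPer2.sig_congr hpp (le_refl _) (by omega) ⟨-1, by push_cast; ring⟩
    · exact ncp_of_min hpp hmin
    · rw [hMeq]
      exact (cycleSet_eq_raySet hpp hPer2 rfl rfl).symm
  · intro p d q k hpc hdf hncpd hqc hkf hncqk
    obtain ⟨hne, hcirc⟩ := hpc
    obtain ⟨hneq, hcircq⟩ := hqc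
    have hpp : 0 < p.edges.length := List.length_pos_iff.mpr hne
    have hppq : 0 < q.edges.length := List.length_pos_iff.mpr hneq
    obtain ⟨R1, hPer1, htail, hseg⟩ := exists_rayOf p d hne hcirc hdf
    have hchar : cycleSet G p d = raySet G R1 p.edges.length d.edges.length :=
      cycleSet_eq_raySet hpp hPer1 hseg htail
    constructor
    · intro hconj
      obtain ⟨R', hPer', htail', hseg'⟩ := exists_rayOf q k hneq hcircq hkf
      have hchar' : cycleSet G q k = raySet G R' q.edges.length k.edges.length :=
        cycleSet_eq_raySet hppq hPer' hseg' htail'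
      have hncp' : G.NoCommonPrefix (R'.seg k.edges.length q.edges.length)
          (R'.tailP k.edges.length) := by rw [hseg', htail']; exact hncqk
      have hmin' := min_of_ncp hppq hncp'
      have hMciss : IsCISS G (cycleSet G q k) := by
        rw [hchar']
        exact raySet_CISS hppq hPer' hmin'
      obtain ⟨s, hin, hout⟩ := hconj
      rw [hchar] at hin hout
      obtain ⟨R2, t2, hPer2, hmin2, hMeq, u, v, h1, h2, hr1, hr2⟩ :=
        machine hpp hPer1 hMciss hin hout
      have hkey : raySet G R' q.edges.length k.edges.length
          = raySet G R2 p.edges.length t2 := by rw [← hchar', hMeq]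
      obtain ⟨hpq, hkt, htails⟩ := raySet_eq_unique hppq hpp hPer' hPer2 hkey
      have hq2 : q = R2.seg t2 p.edges.length := by
        rw [← hseg', seg_eq_of_tails htails, hkt, hpq]
      refine ⟨u, v, h1, h2, ?_, ?_⟩
      · rw [← hseg]
        exact hr1
      · rw [hq2]
        exact hr2
    · rintro ⟨u, v, h1, h2, hpuv, hqvu⟩
      have hkfu : k.first = u.last := by
        rw [hkf, hqvu]
        exact h1
      set bb := G.concatPath u k hkfu with hbbdef
      have e1 : p.first = u.first := by rw [hpuv]; rfl
      have e2 : R1.sig d.edges.length = d.first := by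
        rw [← Ray.tailP_first R1 d.edges.length, htail]
      have hbbf : bb.first = R1.sig d.edges.length := by
        show u.first = R1.sig d.edges.length
        rw [e2, hdf, e1]
      set R2 := R1.glue d.edges.length bb hbbf with hR2def
      set lb := bb.edges.length with hlbdef
      have hlbe : bb.edges = u.edges ++ k.edges := rfl
      have hlb2 : lb = u.edges.length + k.edges.length := by
        show bb.edges.length = _
        rw [hlbe, List.length_append]
      have hple : p.edges.length = u.edges.length + v.edges.length := by
        rw [hpuv]
        show (u.edges ++ v.edges).length = _
        exact List.length_append
      have hbt : R2.tailP lb = bb := Ray.glue_tailP _ _ _ _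
      have hksuf : k.IsSuffixOf bb := by
        refine ⟨u.edges, rfl, ?_⟩
        show k.first = G.walkEnd bb.first u.edges
        rw [hkfu]
        rfl
      have hktail : k = R2.tailP k.edges.length := by
        have h8 : k.IsSuffixOf (R2.tailP lb) := by rw [hbt]; exact hksuf
        exact (Ray.suffix_tailP h8).1
      have hbbseg : R2.segEdges 0 lb = u.edges ++ k.edges := by
        rw [← hlbe]
        exact congrArg DPath.edges hbt
      have hsplitb := R2.segEdges_append 0 k.edges.length u.edges.length
      rw [Nat.zero_add, show k.edges.length + u.edges.length = lb by omega] at hsplitb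
      have hinjb := List.append_inj (hbbseg.symm.trans hsplitb).symm (by simp)
      have hpseg : R1.segEdges d.edges.length p.edges.length = u.edges ++ v.edges := by
        have h3 := congrArg DPath.edges hseg
        have h4 : p.edges = u.edges ++ v.edges := congrArg DPath.edges hpuv
        rw [← h4]
        exact h3
      have hsplitp := R1.segEdges_append d.edges.length v.edges.length u.edges.length
      rw [show v.edges.length + u.edges.length = p.edges.length by omega] at hsplitp
      have hinjp := List.append_inj (hpseg.symm.trans hsplitp).symm (by simp)
      have hzone : ∀ y, R2.om (lb + y) = R1.om (d.edges.length + y) :=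
        Ray.glue_om_high R1 _ bb hbbf
      have homu : ∀ x, x < u.edges.length →
          R2.om (k.edges.length + x) = R1.om (d.edges.length + v.edges.length + x) := by
        have hseq : R2.segEdges k.edges.length u.edges.length
            = R1.segEdges (d.edges.length + v.edges.length) u.edges.length :=
          hinjb.1.trans hinjp.1.symm
        exact Ray.om_eq_of_segEdges hseq
      have hPer2k : R2.Per p.edges.length k.edges.length := by
        intro i hi
        rcases le_or_gt lb i with hge | hlt
        · have e3 := hzone ((i - lb) + p.edges.length)
          rw [show lb + ((i - lb) + p.edges.length) = i + p.edges.length by omega] at e3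
          have e4 := hzone (i - lb)
          rw [show lb + (i - lb) = i by omega] at e4
          rw [e3, e4, show d.edges.length + ((i - lb) + p.edges.length)
            = (d.edges.length + (i - lb)) + p.edges.length by omega]
          exact hPer1 _ (by omega)
        · have e4 := homu (i - k.edges.length) (by omega)
          rw [show k.edges.length + (i - k.edges.length) = i by omega] at e4
          have e3 := hzone (i + p.edges.length - lb)
          rw [show lb + (i + p.edges.length - lb) = i + p.edges.length by omega] at e3
          rw [e3, e4]
          congr 1
          omega
      have hqseg : R2.seg k.edges.length p.edges.length = q := by
        have hqe : q.edges = v.edges ++ u.edges := by rw [hqvu]; rfl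
        refine DPath.ext_ne ?_ ?_
        · show R2.segEdges k.edges.length p.edges.length = q.edges
          have e5 := R2.segEdges_append k.edges.length u.edges.length v.edges.length
          rw [show u.edges.length + v.edges.length = p.edges.length by omega] at e5
          have e6 : R2.segEdges (k.edges.length + u.edges.length) v.edges.length
              = R1.segEdges d.edges.length v.edges.length := by
            have e7 := congrArg DPath.edges
              (Ray.glue_seg_high R1 d.edges.length bb hbbf 0 v.edges.length)
            rw [Nat.add_zero, Nat.add_zero] at e7
            rw [show k.edges.length + u.edges.length = lb by omega]
            exact e7
          rw [e5, e6, hinjp.2, hinjb.1, hqe]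
        · show R2.segEdges k.edges.length p.edges.length ≠ []
          exact List.ne_nil_of_length_pos (by simpa using hpp)
      have hchar2 : cycleSet G q k = raySet G R2 p.edges.length k.edges.length :=
        cycleSet_eq_raySet hpp hPer2k hqseg hktail.symm
      have hsfin : (R1.tailP d.edges.length).first = bb.first := by
        rw [Ray.tailP_first, hbbf]
      refine ⟨GIS.pair (R1.tailP d.edges.length) bb hsfin, ?_, ?_⟩
      · intro h hh
        rw [hchar] at hh
        rw [hchar2]
        exact mu_mem hpp hPer1 hbbf (by omega) hsfin hh
      · intro m hm
        rw [hchar2] at hm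
        rw [hchar]
        exact nu_mem hpp hPer1 hbbf (by omega) hPer2k hsfin hm
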